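/- arXiv:1305.4762 — 3 statements merged into one kernel-verified Lean document; each statement's English description precedes it below -/
import Mathlib

section
/- Let x_1 > x_2 > … be the sequence of atoms (in decreasing order) of a Poisson random measure on (0,∞) with intensity c e^{-c} x^{-2} dx, where c > 0, and for n ≥ 2 set X_n := Σ_i ⌊ (n/ln n) x_i ⌋. Then X_n is almost surely finite, the collection ⌊ (n/ln n) x_i ⌋ (restricted to nonzero values) is the set of atoms of a Poisson random measure on ℕ with intensity m·μ where m = c e^{-c} n/ln n and μ(j) = 1/j - 1/(j+1) for j ∈ ℕ, and X_n has the Luria–Delbrück distribution with parameter m, i.e. E(s^{X_n}) = (1-s)^{m(1-s)/s} for 0 ≤ s ≤ 1. -/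
/-!
STATEMENT 8.  Let `x_1 > x_2 > …` be the decreasingly-ordered atoms of a Poisson random
measure on `(0,∞)` with intensity `c e^{-c} x⁻² dx`, and for `n ≥ 2` put
`X_n = Σ_i ⌊(n/log n) x_i⌋`.  Then `X_n` is a.s. finite; the nonzero values
`⌊(n/log n) x_i⌋` are the atoms of a Poisson random measure on `ℕ` with intensity `m μ`,
`m = c e^{-c} n / log n`, `μ(j) = 1/j - 1/(j+1)`; and `X_n` has the Luria–Delbrück law
with parameter `m`: `E(s^{X_n}) = (1-s)^{m(1-s)/s}`.
-/

open MeasureTheory ProbabilityTheory Filter Real Topology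
open scoped ENNReal NNReal

noncomputable section

/-- the intensity measure `c e^{-c} x⁻² dx` on `(0, ∞)`. -/
def intensityMeasure (c : ℝ) : Measure ℝ :=
  (volume.restrict (Set.Ioi (0 : ℝ))).withDensity
    (fun x => ENNReal.ofReal (c * Real.exp (-c) / x ^ 2))


lemma infinite_iff_forall_exists {S : Set ℕ} :
    S.Infinite ↔ ∀ n : ℕ, ∃ i, n ≤ i ∧ i ∈ S := by
  constructor
  · intro hS n
    by_contra h
    push_neg at h
    apply hS
    apply Set.Finite.subset (Set.finite_Iio n)
    intro i hi
    simp only [Set.mem_Iio]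
    by_contra hlt
    exact absurd hi (h i (le_of_not_gt hlt))
  · intro h
    intro hfin
    obtain ⟨b, hb⟩ := hfin.bddAbove
    obtain ⟨i, hbi, hiS⟩ := h (b + 1)
    exact absurd (hb hiS) (by omega)

lemma measurable_ncard_aux {Ω : Type*} [MeasurableSpace Ω] (E : ℕ → Set Ω)
    (hE : ∀ i, MeasurableSet (E i)) :
    Measurable (fun ω => Set.ncard {i : ℕ | ω ∈ E i}) := by
  apply measurable_to_countable'
  intro k
  have hFset : ∀ F : Finset ℕ, MeasurableSet {ω | {i : ℕ | ω ∈ E i} = (F : Set ℕ)} := by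
    intro F
    have : {ω | {i : ℕ | ω ∈ E i} = (F : Set ℕ)} =
        ⋂ i : ℕ, (if i ∈ F then E i else (E i)ᶜ) := by
      ext ω
      simp only [Set.mem_setOf_eq, Set.ext_iff, Set.mem_iInter, Set.mem_setOf_eq, Finset.mem_coe]
      constructor
      · intro h i
        split_ifs with hi
        · exact (h i).mpr hi
        · exact fun hωi => hi ((h i).mp hωi)
      · intro h i
        constructor
        · intro hωi
          by_contra hi
          have := h i
          rw [if_neg hi] at this
          exact this hωi
        · intro hi
          have := h i
          rwa [if_pos hi] at this
    rw [this]
    exact MeasurableSet.iInter fun i => by split_ifs with hi; exacts [hE i, (hE i).compl]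
  have hInf : MeasurableSet {ω | {i : ℕ | ω ∈ E i}.Infinite} := by
    have : {ω | {i : ℕ | ω ∈ E i}.Infinite} = ⋂ n : ℕ, ⋃ i : ℕ, ⋃ (_ : n ≤ i), E i := by
      ext ω
      simp only [Set.mem_setOf_eq, infinite_iff_forall_exists, Set.mem_iInter, Set.mem_iUnion,
        exists_prop]
    rw [this]
    exact MeasurableSet.iInter fun n => MeasurableSet.iUnion fun i =>
      MeasurableSet.iUnion fun _ => hE i
  by_cases hk : k = 0
  · subst hk
    have : (fun ω => Set.ncard {i : ℕ | ω ∈ E i}) ⁻¹' {0} =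
        {ω | {i : ℕ | ω ∈ E i} = ((∅ : Finset ℕ) : Set ℕ)} ∪
          {ω | {i : ℕ | ω ∈ E i}.Infinite} := by
      ext ω
      simp only [Set.mem_preimage, Set.mem_singleton_iff, Set.mem_union, Set.mem_setOf_eq,
        Finset.coe_empty]
      constructor
      · intro h
        rcases Set.finite_or_infinite {i : ℕ | ω ∈ E i} with hfin | hinf
        · exact Or.inl ((Set.ncard_eq_zero hfin).mp h)
        · exact Or.inr hinf
      · rintro (h | h)
        · rw [h]; simp
        · exact h.ncard
    rw [this]
    exact (hFset ∅).union hInf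
  · have : (fun ω => Set.ncard {i : ℕ | ω ∈ E i}) ⁻¹' {k} =
        ⋃ F : Finset ℕ, ⋃ (_ : F.card = k), {ω | {i : ℕ | ω ∈ E i} = (F : Set ℕ)} := by
      ext ω
      simp only [Set.mem_preimage, Set.mem_singleton_iff, Set.mem_iUnion]
      constructor
      · intro h
        have hfin : {i : ℕ | ω ∈ E i}.Finite := by
          by_contra hinf
          exact hk (by rw [← h, Set.Infinite.ncard hinf])
        refine ⟨hfin.toFinset, ?_, by simp⟩
        rw [← h, ← Set.ncard_coe_finset, Set.Finite.coe_toFinset]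
      · rintro ⟨F, hF, hFeq⟩
        rw [hFeq, Set.ncard_coe_finset, hF]
    rw [this]
    exact MeasurableSet.iUnion fun F => MeasurableSet.iUnion fun _ => hFset F

lemma tsum_nat_eq_sum_range {f : ℕ → ℕ} (hf : {i : ℕ | f i ≠ 0}.Finite) {J : ℕ}
    (hJ : ∀ i, f i ≤ J) :
    (∑' i : ℕ, (f i : ℝ≥0∞)) =
      ∑ k ∈ Finset.range J, ((k + 1 : ℕ) : ℝ≥0∞) * ({i : ℕ | f i = k + 1}.ncard : ℝ≥0∞) := by
  classical
  set T := hf.toFinset with hT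
  have h1 : (∑' i : ℕ, (f i : ℝ≥0∞)) = ∑ i ∈ T, (f i : ℝ≥0∞) := by
    apply tsum_eq_sum
    intro i hi
    have : f i = 0 := by
      by_contra h
      exact hi (hf.mem_toFinset.mpr h)
    simp [this]
  rw [h1]
  have h2 : ∀ i ∈ T, (f i : ℝ≥0∞) =
      ∑ k ∈ Finset.range J, (if f i = k + 1 then ((k + 1 : ℕ) : ℝ≥0∞) else 0) := by
    intro i hi
    have hfi : f i ≠ 0 := by simpa [hT] using (hf.mem_toFinset.mp hi)
    rw [Finset.sum_eq_single_of_mem (f i - 1)]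
    · rw [if_pos (by omega)]
      have : f i - 1 + 1 = f i := by omega
      rw [this]
    · simp only [Finset.mem_range]
      have := hJ i
      omega
    · intro b _ hb
      rw [if_neg (by omega)]
  rw [Finset.sum_congr rfl h2, Finset.sum_comm]
  apply Finset.sum_congr rfl
  intro k _
  have hset : {i : ℕ | f i = k + 1} = (T.filter (fun i => f i = k + 1) : Finset ℕ) := by
    ext i
    simp only [Set.mem_setOf_eq, Finset.coe_filter, Set.mem_setOf_eq, Finset.mem_coe]
    constructor
    · intro h
      exact ⟨hf.mem_toFinset.mpr (show f i ≠ 0 by omega), h⟩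
    · tauto
  rw [hset, Set.ncard_coe_finset]
  rw [← Finset.sum_filter, Finset.sum_const, nsmul_eq_mul, mul_comm]

lemma rpow_neg_two_eq {y : ℝ} (hy : 0 < y) : y ^ (-2 : ℝ) = (y ^ 2)⁻¹ := by
  rw [show (-2 : ℝ) = -((2 : ℕ) : ℝ) by norm_num, Real.rpow_neg hy.le, Real.rpow_natCast]

lemma integrableOn_kdivsq {k ε : ℝ} (hε : 0 < ε) :
    IntegrableOn (fun x => k / x ^ 2) (Set.Ioi ε) := by
  have h0 := integrableOn_Ioi_rpow_of_lt (show (-2 : ℝ) < -1 by norm_num) hε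
  have h1 : IntegrableOn (fun x : ℝ => k * x ^ (-2 : ℝ)) (Set.Ioi ε) := h0.const_mul k
  apply h1.congr_fun ?_ measurableSet_Ioi
  intro y hy
  have hy0 : 0 < y := hε.trans hy
  show k * y ^ (-2 : ℝ) = k / y ^ 2
  rw [rpow_neg_two_eq hy0, div_eq_mul_inv]

lemma integral_Ioi_kdivsq {k ε : ℝ} (hε : 0 < ε) :
    ∫ x in Set.Ioi ε, k / x ^ 2 = k / ε := by
  have h1 : ∫ x in Set.Ioi ε, k / x ^ 2 = ∫ x in Set.Ioi ε, k * x ^ (-2 : ℝ) := by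
    apply setIntegral_congr_fun measurableSet_Ioi
    intro y hy
    have hy0 : 0 < y := hε.trans hy
    show k / y ^ 2 = k * y ^ (-2 : ℝ)
    rw [rpow_neg_two_eq hy0, div_eq_mul_inv]
  rw [h1, MeasureTheory.integral_const_mul, integral_Ioi_rpow_of_lt (by norm_num) hε]
  norm_num
  rw [Real.rpow_neg_one, div_eq_mul_inv]

lemma intensity_Ici (c : ℝ) (hc : 0 < c) {ε : ℝ} (hε : 0 < ε) :
    intensityMeasure c (Set.Ici ε) = ENNReal.ofReal (c * Real.exp (-c) / ε) := by
  have hkpos : 0 < c * Real.exp (-c) := mul_pos hc (Real.exp_pos _)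
  rw [intensityMeasure, withDensity_apply _ measurableSet_Ici,
    Measure.restrict_restrict measurableSet_Ici]
  have hinter : Set.Ici ε ∩ Set.Ioi 0 = Set.Ici ε :=
    Set.inter_eq_left.mpr (fun y hy => lt_of_lt_of_le hε hy)
  rw [hinter, ← Measure.restrict_congr_set Ioi_ae_eq_Ici]
  have hint : IntegrableOn (fun x => c * Real.exp (-c) / x ^ 2) (Set.Ioi ε) :=
    integrableOn_kdivsq hε
  rw [← ofReal_integral_eq_lintegral_ofReal hint
    (Filter.Eventually.of_forall (fun y => by positivity))]
  rw [integral_Ioi_kdivsq hε]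

lemma intensity_Ico (c : ℝ) (hc : 0 < c) {u v : ℝ} (hu : 0 < u) (huv : u ≤ v) :
    intensityMeasure c (Set.Ico u v) =
      ENNReal.ofReal (c * Real.exp (-c) / u - c * Real.exp (-c) / v) := by
  have hv : 0 < v := lt_of_lt_of_le hu huv
  have hkpos : 0 < c * Real.exp (-c) := mul_pos hc (Real.exp_pos _)
  rw [← Set.Ici_diff_Ici,
    measure_diff (Set.Ici_subset_Ici.mpr huv) measurableSet_Ici.nullMeasurableSet
      (by rw [intensity_Ici c hc hv]; exact ENNReal.ofReal_ne_top),
    intensity_Ici c hc hu, intensity_Ici c hc hv,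
    ← ENNReal.ofReal_sub _ (by positivity)]


lemma pgf_poisson {Ω : Type*} [MeasurableSpace Ω] {P : Measure Ω} [IsProbabilityMeasure P]
    {N : Ω → ℕ} (hN : Measurable N) {lam : ℝ} (hlam : 0 ≤ lam)
    (hpmf : ∀ k : ℕ, P {ω | N ω = k} =
      ENNReal.ofReal (Real.exp (-lam) * lam ^ k / (Nat.factorial k)))
    {t : ℝ} (ht0 : 0 ≤ t) (ht1 : t ≤ 1) :
    ∫ ω, t ^ (N ω) ∂P = Real.exp (lam * (t - 1)) := by
  have hmapP : IsProbabilityMeasure (P.map N) := Measure.isProbabilityMeasure_map hN.aemeasurable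
  have hmeas : Measurable (fun y : ℕ => t ^ y) := measurable_from_nat
  have hint : Integrable (fun y : ℕ => t ^ y) (P.map N) := by
    apply Integrable.mono' (integrable_const (1 : ℝ)) hmeas.aestronglyMeasurable
    apply Filter.Eventually.of_forall
    intro y
    rw [Real.norm_eq_abs, abs_of_nonneg (pow_nonneg ht0 _)]
    exact pow_le_one₀ ht0 ht1
  have h1 : ∫ ω, t ^ (N ω) ∂P = ∫ y, t ^ y ∂(P.map N) :=
    (integral_map hN.aemeasurable hmeas.aestronglyMeasurable).symm
  rw [h1, integral_countable' hint]
  have h2 : ∀ k : ℕ, (P.map N).real {k} • t ^ k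
      = Real.exp (-lam) * ((lam * t) ^ k / (Nat.factorial k)) := by
    intro k
    rw [measureReal_def, Measure.map_apply hN (measurableSet_singleton k)]
    have hpre : N ⁻¹' {k} = {ω | N ω = k} := rfl
    rw [hpre, hpmf k, ENNReal.toReal_ofReal (by positivity), smul_eq_mul, mul_pow]
    field_simp
  rw [tsum_congr h2, tsum_mul_left]
  have h3 : ∑' k : ℕ, (lam * t) ^ k / (Nat.factorial k : ℝ) = Real.exp (lam * t) := by
    rw [Real.exp_eq_exp_ℝ, NormedSpace.exp_eq_tsum_div]
  rw [h3, ← Real.exp_add]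
  congr 1
  ring

lemma hasSum_telescope_aux : HasSum (fun k : ℕ => 1 / ((k : ℝ) + 1) - 1 / ((k : ℝ) + 2)) 1 := by
  have hsq : Summable (fun k : ℕ => 1 / ((k : ℝ) + 1) ^ 2) := by
    have h0 : Summable (fun n : ℕ => 1 / (n : ℝ) ^ 2) :=
      summable_one_div_nat_pow.mpr (by norm_num)
    have := (summable_nat_add_iff 1).mpr h0
    apply this.congr
    intro k
    push_cast
    ring
  have hsummable : Summable (fun k : ℕ => 1 / ((k : ℝ) + 1) - 1 / ((k : ℝ) + 2)) := by
    apply Summable.of_nonneg_of_le (fun k => ?_) (fun k => ?_) hsq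
    · have h1 : (0 : ℝ) < (k : ℝ) + 1 := by positivity
      have h2 : ((k : ℝ) + 1) ≤ (k : ℝ) + 2 := by linarith
      have := one_div_le_one_div_of_le h1 h2
      linarith
    · have heq : 1 / ((k : ℝ) + 1) - 1 / ((k : ℝ) + 2)
          = 1 / (((k : ℝ) + 1) * ((k : ℝ) + 2)) := by
        have h1 : ((k : ℝ) + 1) ≠ 0 := by positivity
        have h2 : ((k : ℝ) + 2) ≠ 0 := by positivity
        field_simp
        ring
      rw [heq]
      apply one_div_le_one_div_of_le (by positivity)
      nlinarith [sq_nonneg ((k : ℝ) + 1)]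
  rw [Summable.hasSum_iff_tendsto_nat hsummable]
  have hps : ∀ n : ℕ, ∑ i ∈ Finset.range n, (1 / ((i : ℝ) + 1) - 1 / ((i : ℝ) + 2))
      = 1 - 1 / ((n : ℝ) + 1) := by
    intro n
    have h0 := Finset.sum_range_sub' (fun k : ℕ => 1 / ((k : ℝ) + 1)) n
    have h2 : ∑ i ∈ Finset.range n, (1 / ((i : ℝ) + 1) - 1 / ((i : ℝ) + 2))
        = ∑ i ∈ Finset.range n, (1 / ((i : ℝ) + 1) - 1 / (((i + 1 : ℕ) : ℝ) + 1)) := by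
      apply Finset.sum_congr rfl
      intro i _
      push_cast
      ring
    rw [h2, h0]
    norm_num
  simp only [hps]
  have : Tendsto (fun n : ℕ => 1 / ((n : ℝ) + 1)) atTop (𝓝 0) :=
    tendsto_one_div_add_atTop_nhds_zero_nat
  have h4 := (tendsto_const_nhds : Tendsto (fun _ : ℕ => (1 : ℝ)) atTop (𝓝 1)).sub this
  simpa using h4

lemma hasSum_LD {s : ℝ} (hs0 : 0 < s) (hs1 : s < 1) :
    HasSum (fun k : ℕ => (1 / ((k : ℝ) + 1) - 1 / ((k : ℝ) + 2)) * (s ^ (k + 1) - 1))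
      ((1 - s) / s * Real.log (1 - s)) := by
  have hsne : s ≠ 0 := hs0.ne'
  have habs : |s| < 1 := by rw [abs_of_pos hs0]; exact hs1
  have h1 : HasSum (fun k : ℕ => s ^ (k + 1) / ((k : ℝ) + 1)) (-Real.log (1 - s)) :=
    Real.hasSum_pow_div_log_of_abs_lt_one habs
  have h2 : HasSum (fun k : ℕ => s ^ (k + 1) / ((k : ℝ) + 2))
      (s⁻¹ * (-Real.log (1 - s) - s)) := by
    have hr : HasSum (fun n : ℕ => s ^ (n + 1 + 1) / (((n + 1 : ℕ) : ℝ) + 1))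
        (-Real.log (1 - s) - s) := by
      apply (hasSum_nat_add_iff (f := fun k : ℕ => s ^ (k + 1) / ((k : ℝ) + 1)) 1).mpr
      have hval : (-Real.log (1 - s) - s) + ∑ i ∈ Finset.range 1, s ^ (i + 1) / ((i : ℝ) + 1)
          = -Real.log (1 - s) := by
        simp
      rw [hval]
      exact h1
    have hr2 := hr.mul_left s⁻¹
    have hfg : (fun k : ℕ => s ^ (k + 1) / ((k : ℝ) + 2))
        = fun k : ℕ => s⁻¹ * (s ^ (k + 1 + 1) / (((k + 1 : ℕ) : ℝ) + 1)) := by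
      funext k
      push_cast
      field_simp
      ring
    rw [hfg]
    exact hr2
  have h3 := hasSum_telescope_aux
  have hcomb := (h1.sub h2).sub h3
  have hfun : (fun k : ℕ => (1 / ((k : ℝ) + 1) - 1 / ((k : ℝ) + 2)) * (s ^ (k + 1) - 1))
      = fun k : ℕ => (s ^ (k + 1) / ((k : ℝ) + 1) - s ^ (k + 1) / ((k : ℝ) + 2))
          - (1 / ((k : ℝ) + 1) - 1 / ((k : ℝ) + 2)) := by
    funext k
    ring
  have hval : (-Real.log (1 - s) - s⁻¹ * (-Real.log (1 - s) - s)) - 1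
      = (1 - s) / s * Real.log (1 - s) := by
    field_simp
    ring
  rw [hfun, ← hval]
  exact hcomb

lemma integral_prod_of_iIndepFun {Ω : Type*} [MeasurableSpace Ω] {P : Measure Ω}
    [IsProbabilityMeasure P] {J : ℕ} (g : Fin J → Ω → ℝ)
    (hmeas : ∀ l, Measurable (g l))
    (hindep : ProbabilityTheory.iIndepFun g P) :
    ∫ ω, ∏ l : Fin J, g l ω ∂P = ∏ l : Fin J, ∫ ω, g l ω ∂P := by
  have key : ∀ t : Finset (Fin J),
      ∫ ω, ∏ l ∈ t, g l ω ∂P = ∏ l ∈ t, ∫ ω, g l ω ∂P := by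
    intro t
    induction t using Finset.induction_on with
    | empty => simp
    | @insert i t' hit ih =>
      have hX : ProbabilityTheory.IndepFun (∏ l ∈ t', g l) (g i) P :=
        hindep.indepFun_finsetProd_of_notMem hmeas hit
      have hprodmeas : Measurable (∏ l ∈ t', g l) := by
        rw [show (∏ l ∈ t', g l) = fun ω => ∏ l ∈ t', g l ω by
          funext ω; rw [Finset.prod_apply]]
        exact Finset.measurable_prod t' (fun l _ => hmeas l)
      have hmul := hX.integral_mul_eq_mul_integral hprodmeas.aestronglyMeasurable
        (hmeas i).aestronglyMeasurable
      have heq : (fun ω => ∏ l ∈ insert i t', g l ω) = (∏ l ∈ t', g l) * g i := by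
        funext ω
        rw [Finset.prod_insert hit, Pi.mul_apply, Finset.prod_apply, mul_comm]
      calc ∫ ω, ∏ l ∈ insert i t', g l ω ∂P
          = ∫ ω, ((∏ l ∈ t', g l) * g i) ω ∂P := by rw [heq]
        _ = (∫ ω, (∏ l ∈ t', g l) ω ∂P) * ∫ ω, g i ω ∂P := hmul
        _ = (∫ ω, ∏ l ∈ t', g l ω ∂P) * ∫ ω, g i ω ∂P := by
            congr 1
            apply integral_congr_ae
            apply Filter.Eventually.of_forall
            intro ω
            rw [Finset.prod_apply]
        _ = (∏ l ∈ t', ∫ ω, g l ω ∂P) * ∫ ω, g i ω ∂P := by rw [ih]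
        _ = ∏ l ∈ insert i t', ∫ ω, g l ω ∂P := by rw [Finset.prod_insert hit, mul_comm]
  exact key Finset.univ

theorem floors_of_poisson_atoms
    (c : ℝ) (hc : 0 < c)
    -- a probability space carrying the atoms `x i`
    (Ω : Type) (mΩ : MeasurableSpace Ω)
    (P : Measure Ω) (hP : IsProbabilityMeasure P)
    (x : ℕ → Ω → ℝ) (hxmeas : ∀ i, Measurable (x i))
    -- the atoms are positive and listed in strictly decreasing order
    (horder : ∀ᵐ ω ∂P, (∀ i, 0 < x i ω) ∧ StrictAnti (fun i => x i ω))
    -- `(x i)` is the family of atoms of a Poisson random measure with intensity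
    -- `c e^{-c} x⁻² dx`: for disjoint Borel subsets of `(0,∞)` of finite intensity, the
    -- numbers of atoms are independent Poisson variables with the prescribed means
    (hPRM : ∀ r : ℕ, ∀ A : Fin r → Set ℝ,
      (∀ l, MeasurableSet (A l)) → (∀ l, A l ⊆ Set.Ioi 0) →
      (∀ l, intensityMeasure c (A l) ≠ ⊤) →
      Pairwise (fun l l' => Disjoint (A l) (A l')) →
      iIndepFun
          (fun l ω => Set.ncard {i : ℕ | x i ω ∈ A l}) P ∧
        ∀ l, ∀ j : ℕ,
          P {ω | Set.ncard {i : ℕ | x i ω ∈ A l} = j} =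
            ENNReal.ofReal (Real.exp (-(intensityMeasure c (A l)).toReal) *
              (intensityMeasure c (A l)).toReal ^ j / (Nat.factorial j))) :
    -- conclusions, for every `n ≥ 2`:
    ∀ n : ℕ, 2 ≤ n →
      -- (1) `X_n = Σ_i ⌊(n/log n) x_i⌋` is almost surely finite
      ((∀ᵐ ω ∂P,
        (∑' i : ℕ, (⌊(n / Real.log n) * x i ω⌋₊ : ℝ≥0∞)) ≠ ⊤) ∧
      -- (2) the nonzero values `⌊(n/log n) x_i⌋` form a Poisson random measure on `ℕ`
      -- with intensity `m μ`, `m = c e^{-c} n / log n`, `μ(j) = 1/j - 1/(j+1)`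
      (∀ r : ℕ, ∀ B : Fin r → Set ℕ, (∀ l, (0 : ℕ) ∉ B l) →
        Pairwise (fun l l' => Disjoint (B l) (B l')) →
        iIndepFun
            (fun l ω => Set.ncard {i : ℕ | ⌊(n / Real.log n) * x i ω⌋₊ ∈ B l}) P ∧
          ∀ l, ∀ j : ℕ,
            P {ω | Set.ncard {i : ℕ | ⌊(n / Real.log n) * x i ω⌋₊ ∈ B l} = j} =
              ENNReal.ofReal
                (Real.exp (-(∑' q : B l, (c * Real.exp (-c) * n / Real.log n) *
                    (1 / ((q : ℕ) : ℝ) - 1 / (((q : ℕ) : ℝ) + 1)))) *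
                  (∑' q : B l, (c * Real.exp (-c) * n / Real.log n) *
                    (1 / ((q : ℕ) : ℝ) - 1 / (((q : ℕ) : ℝ) + 1))) ^ j /
                  (Nat.factorial j))) ∧
      -- (3) `X_n` has the Luria–Delbrück law with parameter `m = c e^{-c} n / log n`
      (∀ s : ℝ, 0 < s → s ≤ 1 →
        ∫ ω, s ^ ((∑' i : ℕ, (⌊(n / Real.log n) * x i ω⌋₊ : ℝ≥0∞)).toReal) ∂P =
          (1 - s) ^ ((c * Real.exp (-c) * n / Real.log n) * (1 - s) / s))) := by
  haveI := hP
  intro n hn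
  have hn2 : (2 : ℝ) ≤ (n : ℝ) := by exact_mod_cast hn
  have hlog : 0 < Real.log n := Real.log_pos (by linarith)
  set a : ℝ := (n : ℝ) / Real.log n with ha_def
  have ha : 0 < a := div_pos (by linarith) hlog
  set m : ℝ := c * Real.exp (-c) * (n : ℝ) / Real.log (n : ℝ) with hm_def
  have hm_eq : m = c * Real.exp (-c) * a := by rw [hm_def, ha_def]; ring
  have hmpos : 0 < m := by rw [hm_eq]; positivity
  -- the floor characterization
  have hfloor_mem : ∀ (j : ℕ), j ≠ 0 → ∀ y : ℝ,
      (y ∈ Set.Ico ((j : ℝ) / a) (((j : ℝ) + 1) / a) ↔ ⌊a * y⌋₊ = j) := by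
    intro j hj y
    rw [Nat.floor_eq_iff' hj, Set.mem_Ico, div_le_iff₀ ha, lt_div_iff₀ ha, mul_comm a y]
  set I : ℕ → Set ℝ := fun j => Set.Ico ((j : ℝ) / a) (((j : ℝ) + 1) / a) with hI_def
  have hI_meas : ∀ j, MeasurableSet (I j) := fun j => measurableSet_Ico
  have hI_sub : ∀ j, j ≠ 0 → I j ⊆ Set.Ioi 0 := by
    intro j hj y hy
    have hj0 : (0 : ℝ) < (j : ℝ) := by exact_mod_cast Nat.pos_of_ne_zero hj
    have h1 : 0 < (j : ℝ) / a := div_pos hj0 ha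
    exact lt_of_lt_of_le h1 hy.1
  have hterm_nonneg : ∀ j : ℕ, j ≠ 0 → 0 ≤ m * (1 / (j : ℝ) - 1 / ((j : ℝ) + 1)) := by
    intro j hj
    have hj0 : (0 : ℝ) < (j : ℝ) := by exact_mod_cast Nat.pos_of_ne_zero hj
    have h1 : 1 / ((j : ℝ) + 1) ≤ 1 / (j : ℝ) := one_div_le_one_div_of_le hj0 (by linarith)
    apply mul_nonneg hmpos.le
    linarith
  have hI_nu : ∀ j : ℕ, j ≠ 0 → intensityMeasure c (I j)
      = ENNReal.ofReal (m * (1 / (j : ℝ) - 1 / ((j : ℝ) + 1))) := by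
    intro j hj
    have hj0 : (0 : ℝ) < (j : ℝ) := by exact_mod_cast Nat.pos_of_ne_zero hj
    have hu : 0 < (j : ℝ) / a := div_pos hj0 ha
    have huv : (j : ℝ) / a ≤ ((j : ℝ) + 1) / a := by
      apply (div_le_div_iff_of_pos_right ha).mpr
      linarith
    have hstep : I j = Set.Ico ((j : ℝ) / a) (((j : ℝ) + 1) / a) := rfl
    rw [hstep, intensity_Ico c hc hu huv]
    congr 1
    have h1 : a ≠ 0 := ha.ne'
    have h2 : (j : ℝ) ≠ 0 := hj0.ne'
    have h3 : (j : ℝ) + 1 ≠ 0 := by positivity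
    rw [hm_eq]
    field_simp
  have hsum_base : Summable (fun j : ℕ => m * (1 / (j : ℝ) - 1 / ((j : ℝ) + 1))) := by
    rw [← summable_nat_add_iff 1]
    apply Summable.congr (hasSum_telescope_aux.summable.mul_left m)
    intro j
    push_cast
    ring
  -- main properties of the union sets
  have hB_main : ∀ B : Set ℕ, 0 ∉ B →
      MeasurableSet (⋃ j ∈ B, I j) ∧ (⋃ j ∈ B, I j) ⊆ Set.Ioi 0 ∧
      (∀ y : ℝ, y ∈ (⋃ j ∈ B, I j) ↔ ⌊a * y⌋₊ ∈ B) ∧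
      intensityMeasure c (⋃ j ∈ B, I j)
        = ENNReal.ofReal (∑' q : B, m * (1 / ((q : ℕ) : ℝ) - 1 / (((q : ℕ) : ℝ) + 1))) := by
    intro B hB0
    have hne : ∀ j, j ∈ B → j ≠ 0 := fun j hj h => hB0 (h ▸ hj)
    refine ⟨MeasurableSet.biUnion (Set.to_countable B) (fun j _ => hI_meas j),
      Set.iUnion₂_subset (fun j hj => hI_sub j (hne j hj)), ?_, ?_⟩
    · intro y
      constructor
      · intro hy
        obtain ⟨j, hj, hyj⟩ := Set.mem_iUnion₂.mp hy
        rwa [(hfloor_mem j (hne j hj) y).mp hyj]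
      · intro hy
        exact Set.mem_iUnion₂.mpr ⟨⌊a * y⌋₊, hy, (hfloor_mem _ (hne _ hy) y).mpr rfl⟩
    · have hrw : (⋃ j ∈ B, I j) = ⋃ q : B, I q := by rw [Set.biUnion_eq_iUnion]
      have hdisjq : Pairwise (Function.onFun Disjoint (fun q : B => I q)) := by
        intro q q' hqq'
        rw [Function.onFun, Set.disjoint_left]
        intro y hy hy'
        have e1 := (hfloor_mem q (hne q q.2) y).mp hy
        have e2 := (hfloor_mem q' (hne q' q'.2) y).mp hy'
        exact hqq' (Subtype.ext (e1.symm.trans e2))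
      rw [hrw, measure_iUnion hdisjq (fun q => hI_meas q)]
      rw [tsum_congr (fun q : B => hI_nu q (hne q q.2))]
      rw [← ENNReal.ofReal_tsum_of_nonneg (fun q : B => hterm_nonneg q (hne q q.2))]
      exact Summable.congr (hsum_base.subtype B) (fun q => rfl)
  -- Poisson counts in Ici ε
  have hIci : ∀ ε : ℝ, 0 < ε → ∀ j : ℕ,
      P {ω | Set.ncard {i : ℕ | x i ω ∈ Set.Ici ε} = j} =
        ENNReal.ofReal (Real.exp (-(c * Real.exp (-c) / ε)) *
          (c * Real.exp (-c) / ε) ^ j / (Nat.factorial j)) := by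
    intro ε hε j
    have hres := hPRM 1 (fun _ => Set.Ici ε) (fun _ => measurableSet_Ici)
      (fun _ => fun y hy => lt_of_lt_of_le hε hy)
      (fun _ => by rw [intensity_Ici c hc hε]; exact ENNReal.ofReal_ne_top)
      (fun l l' h => absurd (Subsingleton.elim l l') h)
    have h2 := hres.2 0 j
    rwa [intensity_Ici c hc hε, ENNReal.toReal_ofReal (by positivity)] at h2
  -- almost sure finiteness of the support
  have hGc : P {ω | ¬ ({i : ℕ | ⌊a * x i ω⌋₊ ≠ 0}).Finite} = 0 := by
    have hbound : ∀ p : ℕ, P {ω | ¬ ({i : ℕ | ⌊a * x i ω⌋₊ ≠ 0}).Finite}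
        ≤ ENNReal.ofReal (Real.exp (-(m * ((p : ℝ) + 1)))) := by
      intro p
      set ε : ℝ := (1 / a) / ((p : ℝ) + 1) with hε_def
      have hε : 0 < ε := by positivity
      have hsubset : {ω | ¬ ({i : ℕ | ⌊a * x i ω⌋₊ ≠ 0}).Finite}
          ⊆ {ω | Set.ncard {i : ℕ | x i ω ∈ Set.Ici ε} = 0} := by
        intro ω hω
        simp only [Set.mem_setOf_eq] at hω ⊢
        have hsub : {i : ℕ | ⌊a * x i ω⌋₊ ≠ 0} ⊆ {i : ℕ | x i ω ∈ Set.Ici ε} := by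
          intro i hi
          simp only [Set.mem_setOf_eq] at hi ⊢
          have h1 : 1 ≤ a * x i ω := by
            by_contra h
            push_neg at h
            exact hi (Nat.floor_eq_zero.mpr h)
          have h2 : 1 / a ≤ x i ω := (div_le_iff₀ ha).mpr (by rwa [mul_comm] at h1)
          have h3 : ε ≤ 1 / a := by
            rw [hε_def]
            apply div_le_self (by positivity)
            have := Nat.cast_nonneg (α := ℝ) p
            linarith
          exact le_trans h3 h2
        exact Set.Infinite.ncard (Set.Infinite.mono hsub hω)
      have hεval : c * Real.exp (-c) / ε = m * ((p : ℝ) + 1) := by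
        rw [hε_def, hm_eq]
        have h1 : a ≠ 0 := ha.ne'
        have h2 : ((p : ℝ) + 1) ≠ 0 := by positivity
        field_simp
      calc P {ω | ¬ ({i : ℕ | ⌊a * x i ω⌋₊ ≠ 0}).Finite}
          ≤ P {ω | Set.ncard {i : ℕ | x i ω ∈ Set.Ici ε} = 0} := measure_mono hsubset
        _ = ENNReal.ofReal (Real.exp (-(m * ((p : ℝ) + 1)))) := by
            rw [hIci ε hε 0]
            rw [hεval]
            norm_num
    have htend : Tendsto (fun p : ℕ => ENNReal.ofReal (Real.exp (-(m * ((p : ℝ) + 1)))))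
        atTop (𝓝 0) := by
      rw [show (0 : ℝ≥0∞) = ENNReal.ofReal 0 by simp]
      apply ENNReal.tendsto_ofReal
      have h1 : Tendsto (fun p : ℕ => m * ((p : ℝ) + 1)) atTop atTop := by
        apply Tendsto.const_mul_atTop hmpos
        apply tendsto_atTop_add_const_right atTop 1
        exact tendsto_natCast_atTop_atTop
      exact Real.tendsto_exp_atBot.comp (tendsto_neg_atTop_atBot.comp h1)
    exact le_antisymm (ge_of_tendsto' htend hbound) zero_le
  have hfin_ae : ∀ᵐ ω ∂P, ({i : ℕ | ⌊a * x i ω⌋₊ ≠ 0}).Finite := by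
    rw [MeasureTheory.ae_iff]
    exact hGc
  refine ⟨?_, ?_, ?_⟩
  -- Part (1): a.s. finiteness
  · filter_upwards [hfin_ae] with ω hω
    have hbound : ∀ i, ⌊a * x i ω⌋₊ ≤ hω.toFinset.sup (fun i => ⌊a * x i ω⌋₊) := by
      intro i
      by_cases h : ⌊a * x i ω⌋₊ = 0
      · omega
      · exact Finset.le_sup (f := fun i => ⌊a * x i ω⌋₊) (hω.mem_toFinset.mpr h)
    rw [tsum_nat_eq_sum_range hω hbound]
    apply ne_of_lt
    apply ENNReal.sum_lt_top.mpr
    intro k _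
    exact ENNReal.mul_lt_top (ENNReal.natCast_lt_top _) (ENNReal.natCast_lt_top _)
  -- Part (2): Poisson random measure on ℕ
  · intro r B hB0 hBdisj
    have hA := fun l : Fin r => hB_main (B l) (hB0 l)
    have hres := hPRM r (fun l => ⋃ j ∈ B l, I j) (fun l => (hA l).1) (fun l => (hA l).2.1)
      (fun l => by rw [(hA l).2.2.2]; exact ENNReal.ofReal_ne_top) ?_
    · constructor
      · have hfun_eq : (fun (l : Fin r) (ω : Ω) => Set.ncard {i : ℕ | ⌊a * x i ω⌋₊ ∈ B l})
            = fun l ω => Set.ncard {i : ℕ | x i ω ∈ ⋃ j ∈ B l, I j} := by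
          funext l ω
          congr 1
          ext i
          exact ((hA l).2.2.1 (x i ω)).symm
        rw [hfun_eq]
        exact hres.1
      · intro l j
        have hset : {ω | Set.ncard {i : ℕ | ⌊a * x i ω⌋₊ ∈ B l} = j}
            = {ω | Set.ncard {i : ℕ | x i ω ∈ ⋃ j' ∈ B l, I j'} = j} := by
          ext ω
          simp only [Set.mem_setOf_eq]
          have : {i : ℕ | ⌊a * x i ω⌋₊ ∈ B l} = {i : ℕ | x i ω ∈ ⋃ j' ∈ B l, I j'} := by
            ext i
            exact ((hA l).2.2.1 (x i ω)).symm
          rw [this]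
        rw [hset]
        have h2 := hres.2 l j
        have hnn : 0 ≤ ∑' q : (B l), m * (1 / ((q : ℕ) : ℝ) - 1 / (((q : ℕ) : ℝ) + 1)) :=
          tsum_nonneg (fun q => hterm_nonneg q (fun h => hB0 l (h ▸ q.2)))
        rwa [(hA l).2.2.2, ENNReal.toReal_ofReal hnn] at h2
    · intro l l' hll'
      rw [Set.disjoint_left]
      intro y hy hy'
      have h1 := ((hA l).2.2.1 y).mp hy
      have h2 := ((hA l').2.2.1 y).mp hy'
      exact Set.disjoint_left.mp (hBdisj hll') h1 h2
  -- Part (3): Luria–Delbrück law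
  · intro s hs0 hs1
    rcases eq_or_lt_of_le hs1 with heq | hlt
    · subst heq
      simp only [Real.one_rpow, sub_self, mul_zero, zero_div, Real.rpow_zero]
      simp [integral_const]
    · set N : ℕ → Ω → ℕ := fun j ω => Set.ncard {i : ℕ | x i ω ∈ I j} with hN_def
      have hN_meas : ∀ j, Measurable (N j) := fun j =>
        measurable_ncard_aux (fun i => (x i) ⁻¹' (I j)) (fun i => (hxmeas i) (hI_meas j))
      set lam : ℕ → ℝ := fun j => m * (1 / (j : ℝ) - 1 / ((j : ℝ) + 1)) with hlam_def
      have hpmf : ∀ j : ℕ, j ≠ 0 → ∀ k : ℕ, P {ω | N j ω = k}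
          = ENNReal.ofReal (Real.exp (-(lam j)) * (lam j) ^ k / (Nat.factorial k)) := by
        intro j hj k
        have hres := hPRM 1 (fun _ => I j) (fun _ => hI_meas j) (fun _ => hI_sub j hj)
          (fun _ => by rw [hI_nu j hj]; exact ENNReal.ofReal_ne_top)
          (fun l l' h => absurd (Subsingleton.elim l l') h)
        have h2 := hres.2 0 k
        rwa [hI_nu j hj, ENNReal.toReal_ofReal (hterm_nonneg j hj)] at h2
      have hindepJ : ∀ J : ℕ, iIndepFun
          (fun (l : Fin J) (ω : Ω) => N ((l : ℕ) + 1) ω) P := by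
        intro J
        refine (hPRM J (fun l => I ((l : ℕ) + 1)) (fun l => hI_meas _)
          (fun l => hI_sub _ (Nat.succ_ne_zero _))
          (fun l => by rw [hI_nu _ (Nat.succ_ne_zero _)]; exact ENNReal.ofReal_ne_top) ?_).1
        intro l l' hll'
        rw [Set.disjoint_left]
        intro y hy hy'
        have e1 := (hfloor_mem _ (Nat.succ_ne_zero (l : ℕ)) y).mp hy
        have e2 := (hfloor_mem _ (Nat.succ_ne_zero (l' : ℕ)) y).mp hy'
        exact hll' (Fin.ext (by omega))
      set Y : ℕ → Ω → ℕ := fun J ω => ∑ k ∈ Finset.range J, (k + 1) * N (k + 1) ω with hY_def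
      have hY_meas : ∀ J, Measurable (Y J) := by
        intro J
        show Measurable fun ω => ∑ k ∈ Finset.range J, (k + 1) * N (k + 1) ω
        apply Finset.measurable_sum
        intro k _
        exact (measurable_from_nat (f := fun t : ℕ => (k + 1) * t)).comp (hN_meas (k + 1))
      have hae : ∀ᵐ ω ∂P, ∃ M : ℕ, ∀ J, M ≤ J →
          (∑' i : ℕ, (⌊a * x i ω⌋₊ : ℝ≥0∞)) = (Y J ω : ℝ≥0∞) := by
        filter_upwards [hfin_ae] with ω hω
        refine ⟨hω.toFinset.sup (fun i => ⌊a * x i ω⌋₊), fun J hJ => ?_⟩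
        have hbound : ∀ i, ⌊a * x i ω⌋₊ ≤ J := by
          intro i
          by_cases h : ⌊a * x i ω⌋₊ = 0
          · omega
          · exact le_trans (Finset.le_sup (f := fun i => ⌊a * x i ω⌋₊)
              (hω.mem_toFinset.mpr h)) hJ
        rw [tsum_nat_eq_sum_range hω hbound, hY_def]
        push_cast
        apply Finset.sum_congr rfl
        intro k _
        have hset : {i : ℕ | ⌊a * x i ω⌋₊ = k + 1} = {i : ℕ | x i ω ∈ I (k + 1)} := by
          ext i
          exact (hfloor_mem (k + 1) (Nat.succ_ne_zero k) (x i ω)).symm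
        rw [hset]
      have hDCT : Tendsto (fun J => ∫ ω, (s ^ (Y J ω) : ℝ) ∂P) atTop
          (𝓝 (∫ ω, s ^ ((∑' i : ℕ, (⌊a * x i ω⌋₊ : ℝ≥0∞)).toReal) ∂P)) := by
        apply tendsto_integral_of_dominated_convergence (bound := fun _ => (1 : ℝ))
        · intro J
          exact ((measurable_from_nat (f := fun t : ℕ => (s : ℝ) ^ t)).comp
            (hY_meas J)).aestronglyMeasurable
        · exact integrable_const 1
        · intro J
          apply Filter.Eventually.of_forall
          intro ω
          rw [Real.norm_eq_abs, abs_of_nonneg (pow_nonneg hs0.le _)]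
          exact pow_le_one₀ hs0.le hs1
        · filter_upwards [hae] with ω hω
          obtain ⟨M, hM⟩ := hω
          apply Tendsto.congr' ?_ tendsto_const_nhds
          rw [Filter.EventuallyEq, eventually_atTop]
          refine ⟨M, fun J hJ => ?_⟩
          rw [hM J hJ, ENNReal.toReal_natCast, Real.rpow_natCast]
      have hsingle : ∀ j : ℕ, j ≠ 0 → ∫ ω, ((s ^ j) ^ (N j ω) : ℝ) ∂P
          = Real.exp (lam j * (s ^ j - 1)) :=
        fun j hj => pgf_poisson (hN_meas j) (hterm_nonneg j hj) (hpmf j hj)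
          (pow_nonneg hs0.le j) (pow_le_one₀ hs0.le hs1)
      have hprod : ∀ J : ℕ, ∫ ω, (s ^ (Y J ω) : ℝ) ∂P
          = ∏ k ∈ Finset.range J, Real.exp (lam (k + 1) * (s ^ (k + 1) - 1)) := by
        intro J
        have hstep1 : ∀ ω, (s ^ (Y J ω) : ℝ)
            = ∏ l : Fin J, (s ^ (((l : ℕ) + 1) * N ((l : ℕ) + 1) ω) : ℝ) := by
          intro ω
          rw [Fin.prod_univ_eq_prod_range (fun k => (s : ℝ) ^ ((k + 1) * N (k + 1) ω)) J]
          rw [hY_def]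
          rw [← Finset.prod_pow_eq_pow_sum]
        have hindepcomp : iIndepFun
            (fun (l : Fin J) => (fun t : ℕ => (s : ℝ) ^ (((l : ℕ) + 1) * t))
              ∘ (fun ω => N ((l : ℕ) + 1) ω)) P :=
          (hindepJ J).comp _ (fun l => measurable_from_nat)
        have hmeascomp : ∀ l : Fin J,
            Measurable (fun ω => (s : ℝ) ^ (((l : ℕ) + 1) * N ((l : ℕ) + 1) ω)) :=
          fun l => (measurable_from_nat (f := fun t : ℕ => (s : ℝ) ^ (((l : ℕ) + 1) * t))).comp
            (hN_meas _)
        calc ∫ ω, (s ^ (Y J ω) : ℝ) ∂P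
            = ∫ ω, ∏ l : Fin J, (s ^ (((l : ℕ) + 1) * N ((l : ℕ) + 1) ω) : ℝ) ∂P := by
              apply integral_congr_ae
              exact Filter.Eventually.of_forall (fun ω => hstep1 ω)
          _ = ∏ l : Fin J, ∫ ω, (s ^ (((l : ℕ) + 1) * N ((l : ℕ) + 1) ω) : ℝ) ∂P :=
              integral_prod_of_iIndepFun _ hmeascomp hindepcomp
          _ = ∏ l : Fin J, Real.exp (lam ((l : ℕ) + 1) * (s ^ ((l : ℕ) + 1) - 1)) := by
              apply Finset.prod_congr rfl
              intro l _
              have hpow : ∀ ω, (s : ℝ) ^ (((l : ℕ) + 1) * N ((l : ℕ) + 1) ω)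
                  = (s ^ ((l : ℕ) + 1)) ^ (N ((l : ℕ) + 1) ω) := fun ω => pow_mul s _ _
              rw [integral_congr_ae (Filter.Eventually.of_forall hpow)]
              exact hsingle _ (Nat.succ_ne_zero _)
          _ = ∏ k ∈ Finset.range J, Real.exp (lam (k + 1) * (s ^ (k + 1) - 1)) :=
              Fin.prod_univ_eq_prod_range (fun k => Real.exp (lam (k + 1) * (s ^ (k + 1) - 1))) J
      have hHS : HasSum (fun k : ℕ => lam (k + 1) * (s ^ (k + 1) - 1))
          (m * ((1 - s) / s * Real.log (1 - s))) := by
        have h0 := (hasSum_LD hs0 hlt).mul_left m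
        have hfun : (fun k : ℕ => m * ((1 / ((k : ℝ) + 1) - 1 / ((k : ℝ) + 2)) * (s ^ (k + 1) - 1)))
            = fun k : ℕ => lam (k + 1) * (s ^ (k + 1) - 1) := by
          funext k
          rw [hlam_def]
          push_cast
          ring
        rwa [hfun] at h0
      have hQtend : Tendsto (fun J => ∏ k ∈ Finset.range J,
          Real.exp (lam (k + 1) * (s ^ (k + 1) - 1))) atTop
          (𝓝 (Real.exp (m * ((1 - s) / s * Real.log (1 - s))))) := by
        have h2 := hHS.tendsto_sum_nat
        have h3 := (Real.continuous_exp.tendsto _).comp h2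
        apply h3.congr
        intro J
        exact Real.exp_sum _ _
      have h5 : Tendsto (fun J => ∫ ω, (s ^ (Y J ω) : ℝ) ∂P) atTop
          (𝓝 (Real.exp (m * ((1 - s) / s * Real.log (1 - s))))) := by
        simp only [hprod]
        exact hQtend
      have h6 := tendsto_nhds_unique hDCT h5
      rw [h6, Real.rpow_def_of_pos (by linarith : (0 : ℝ) < 1 - s)]
      congr 1
      ring

end
end

section
/- Fix d ≥ 2 and c > 0. Perform Bernoulli bond percolation with parameter e^{-c/h} on the rooted infinite d-regular tree and let ∇_h be the number of vertices at height h disconnected from the root. Then d^{-h} ∇_h → 1 - e^{-c} in probability as h → ∞. -/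
open MeasureTheory ProbabilityTheory Filter Real Topology
open scoped ENNReal NNReal Classical

set_option linter.unusedSectionVars false
set_option linter.unusedVariables false
set_option maxHeartbeats 1000000

noncomputable section

def eta (d k : ℕ) (del : (ℓ : ℕ) → (Fin ℓ → Fin d) → Bool) (f : Fin k → Fin d) : ℕ :=
  Set.ncard {ℓ : Fin k | del (ℓ.1 + 1) (fun i => f (Fin.castLE ℓ.isLt i)) = true}

namespace RegTreeAux

variable {d : ℕ}

/-- coordinate of the edge above the prefix of length `ℓ+1` of `f` -/
def kap {h : ℕ} (f : Fin h → Fin d) (ℓ : Fin h) : (ℓ : ℕ) × (Fin ℓ → Fin d) :=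
  ⟨ℓ.1 + 1, fun i => f (Fin.castLE ℓ.isLt i)⟩

lemma kap_injective {h : ℕ} (f : Fin h → Fin d) : Function.Injective (kap f) := by
  intro ℓ ℓ' hh
  have : ℓ.1 + 1 = ℓ'.1 + 1 := congrArg Sigma.fst hh
  exact Fin.ext (Nat.succ_injective this)

lemma kap_eq_iff {h : ℕ} (f g : Fin h → Fin d) (ℓ : Fin h) :
    kap f ℓ = kap g ℓ ↔ ∀ i : Fin h, i.1 < ℓ.1 + 1 → f i = g i := by
  constructor
  · intro hh i hi
    have h2 : (fun i : Fin (ℓ.1+1) => f (Fin.castLE ℓ.isLt i)) =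
        (fun i : Fin (ℓ.1+1) => g (Fin.castLE ℓ.isLt i)) := by
      have h3 : HEq (kap f ℓ).2 (kap g ℓ).2 := by rw [hh]
      exact eq_of_heq h3
    exact congrFun h2 ⟨i.1, hi⟩
  · intro hh
    exact congrArg (Sigma.mk (ℓ.1+1)) (funext fun i => hh (Fin.castLE ℓ.isLt i) i.isLt)

/-- number of common edges of the branches of `f` and `g` -/
def magree {h : ℕ} (f g : Fin h → Fin d) : ℕ :=
  (Finset.univ.filter (fun ℓ : Fin h => kap f ℓ = kap g ℓ)).card

lemma magree_le {h : ℕ} (f g : Fin h → Fin d) : magree f g ≤ h := by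
  exact le_trans (Finset.card_filter_le _ _) (by simp)

lemma image_inter_image {h : ℕ} (f g : Fin h → Fin d) :
    (Finset.univ.image (kap f)) ∩ (Finset.univ.image (kap g)) =
      Finset.image (kap f) (Finset.univ.filter (fun ℓ => kap f ℓ = kap g ℓ)) := by
  ext p
  simp only [Finset.mem_inter, Finset.mem_image, Finset.mem_filter, Finset.mem_univ, true_and]
  constructor
  · rintro ⟨⟨ℓ, rfl⟩, ⟨ℓ', hℓ'⟩⟩
    have hfst : ℓ'.1 + 1 = ℓ.1 + 1 := congrArg Sigma.fst hℓ'
    have : ℓ' = ℓ := Fin.ext (Nat.succ_injective hfst)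
    subst this
    exact ⟨ℓ', hℓ'.symm, rfl⟩
  · rintro ⟨ℓ, hℓ, rfl⟩
    exact ⟨⟨ℓ, rfl⟩, ⟨ℓ, hℓ.symm⟩⟩

lemma card_union_kap {h : ℕ} (f g : Fin h → Fin d) :
    ((Finset.univ.image (kap f)) ∪ (Finset.univ.image (kap g))).card
      = 2 * h - magree f g := by
  have h1 : ((Finset.univ.image (kap f)) ∪ (Finset.univ.image (kap g))).card
      + ((Finset.univ.image (kap f)) ∩ (Finset.univ.image (kap g))).card
      = (Finset.univ.image (kap f)).card + (Finset.univ.image (kap g)).card :=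
    Finset.card_union_add_card_inter _ _
  rw [image_inter_image f g, Finset.card_image_of_injective _ (kap_injective f),
    Finset.card_image_of_injective _ (kap_injective f),
    Finset.card_image_of_injective _ (kap_injective g)] at h1
  simp only [Finset.card_univ, Fintype.card_fin] at h1
  have := magree_le f g
  unfold magree at *
  omega


lemma card_agree_le {h : ℕ} (ℓ : Fin h) :
    (Finset.univ.filter (fun fg : (Fin h → Fin d) × (Fin h → Fin d) =>
      kap fg.1 ℓ = kap fg.2 ℓ)).card ≤ d ^ h * d ^ (h - (ℓ.1+1)) := by
  have hcard : (Finset.univ : Finset ((Fin h → Fin d) × (Fin (h - (ℓ.1+1)) → Fin d))).card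
      = d ^ h * d ^ (h - (ℓ.1+1)) := by
    simp [Finset.card_univ]
  rw [← hcard]
  apply Finset.card_le_card_of_injOn
    (fun fg => (fg.1, fun i : Fin (h - (ℓ.1+1)) => fg.2 ⟨ℓ.1+1+i.1, by omega⟩))
  · intro _ _; exact Finset.mem_univ _
  · intro fg hfg fg' hfg' heq
    simp only [Finset.mem_coe, Finset.mem_filter, Finset.mem_univ, true_and] at hfg hfg'
    simp only [Prod.mk.injEq] at heq
    obtain ⟨h1, h2⟩ := heq
    have hsnd : fg.2 = fg'.2 := by
      funext j
      by_cases hj : j.1 < ℓ.1 + 1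
      · have e1 := (kap_eq_iff fg.1 fg.2 ℓ).mp hfg j hj
        have e2 := (kap_eq_iff fg'.1 fg'.2 ℓ).mp hfg' j hj
        rw [← e1, ← e2, h1]
      · have hl : ℓ.1 + 1 ≤ j.1 := Nat.le_of_not_lt hj
        have hi : j.1 - (ℓ.1+1) < h - (ℓ.1+1) := by omega
        have := congrFun h2 ⟨j.1 - (ℓ.1+1), hi⟩
        simp only at this
        have hidx : (⟨ℓ.1+1+(j.1-(ℓ.1+1)), by omega⟩ : Fin h) = j := by
          apply Fin.ext; simp; omega
        rwa [hidx] at this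
    exact Prod.ext h1 hsnd

lemma sum_magree_le (hd : 2 ≤ d) (h : ℕ) :
    (∑ fg : (Fin h → Fin d) × (Fin h → Fin d), (magree fg.1 fg.2 : ℝ))
      ≤ (d:ℝ) ^ (2*h) := by
  have hswap : (∑ fg : (Fin h → Fin d) × (Fin h → Fin d), (magree fg.1 fg.2 : ℝ))
      = ∑ ℓ : Fin h, ((Finset.univ.filter (fun fg : (Fin h → Fin d) × (Fin h → Fin d) =>
          kap fg.1 ℓ = kap fg.2 ℓ)).card : ℝ) := by
    simp only [magree, Finset.card_filter]
    push_cast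
    rw [Finset.sum_comm]
  rw [hswap]
  have hd1 : (1:ℝ) ≤ (d:ℝ) := by exact_mod_cast le_trans one_le_two hd
  have hd0 : (0:ℝ) < (d:ℝ) := lt_of_lt_of_le one_pos hd1
  have hstep : ∀ ℓ : Fin h,
      ((Finset.univ.filter (fun fg : (Fin h → Fin d) × (Fin h → Fin d) =>
        kap fg.1 ℓ = kap fg.2 ℓ)).card : ℝ) ≤ (d:ℝ)^(2*h) * (1/2)^(ℓ.1+1) := by
    intro ℓ
    have h1 : ((Finset.univ.filter (fun fg : (Fin h → Fin d) × (Fin h → Fin d) =>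
        kap fg.1 ℓ = kap fg.2 ℓ)).card : ℝ) ≤ ((d ^ h * d ^ (h - (ℓ.1+1)) : ℕ) : ℝ) := by
      exact_mod_cast card_agree_le ℓ
    refine h1.trans ?_
    push_cast
    have hle : ℓ.1 + 1 ≤ h := ℓ.isLt
    have e1 : (d:ℝ)^h * (d:ℝ)^(h - (ℓ.1+1)) = (d:ℝ)^(2*h) / (d:ℝ)^(ℓ.1+1) := by
      rw [eq_div_iff (by positivity), mul_assoc, ← pow_add, ← pow_add]
      congr 1; omega
    rw [e1]
    have h2 : ((2:ℝ))^(ℓ.1+1) ≤ (d:ℝ)^(ℓ.1+1) :=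
      pow_le_pow_left₀ (by norm_num) (by exact_mod_cast hd) _
    have h3 : (d:ℝ)^(2*h) / (d:ℝ)^(ℓ.1+1) ≤ (d:ℝ)^(2*h) / (2:ℝ)^(ℓ.1+1) :=
      div_le_div_of_nonneg_left (by positivity) (by positivity) h2
    refine h3.trans (le_of_eq ?_)
    rw [div_eq_mul_inv, ← one_div, one_div_pow]
  calc ∑ ℓ : Fin h, ((Finset.univ.filter (fun fg : (Fin h → Fin d) × (Fin h → Fin d) =>
        kap fg.1 ℓ = kap fg.2 ℓ)).card : ℝ)
      ≤ ∑ ℓ : Fin h, (d:ℝ)^(2*h) * (1/2)^(ℓ.1+1) := Finset.sum_le_sum (fun ℓ _ => hstep ℓ)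
    _ = (d:ℝ)^(2*h) * ((1/2) * ∑ i ∈ Finset.range h, (1/2:ℝ)^i) := by
        rw [Fin.sum_univ_eq_sum_range (fun i => (d:ℝ)^(2*h) * (1/2:ℝ)^(i+1)) h,
          Finset.mul_sum, Finset.mul_sum]
        apply Finset.sum_congr rfl
        intro i _; ring
    _ ≤ (d:ℝ)^(2*h) * ((1/2) * 2) := by
        apply mul_le_mul_of_nonneg_left _ (by positivity)
        apply mul_le_mul_of_nonneg_left (sum_geometric_two_le h) (by norm_num)
    _ = (d:ℝ)^(2*h) := by ring


section Ints
variable {Ω : Type} [MeasurableSpace Ω] (P : Measure Ω) [IsProbabilityMeasure P]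

lemma toReal_compl {s : Set Ω} (hs : MeasurableSet s) :
    (P sᶜ).toReal = 1 - (P s).toReal := by
  rw [measure_compl hs (measure_ne_top _ _), measure_univ,
    ENNReal.toReal_sub_of_le prob_le_one ENNReal.one_ne_top, ENNReal.toReal_one]

lemma toReal_union {A B : Set Ω} (hB : MeasurableSet B) :
    (P (A ∪ B)).toReal = (P A).toReal + (P B).toReal - (P (A ∩ B)).toReal := by
  have h1 := measure_union_add_inter (μ := P) A hB
  have h2 := congrArg ENNReal.toReal h1
  rw [ENNReal.toReal_add (measure_ne_top _ _) (measure_ne_top _ _),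
    ENNReal.toReal_add (measure_ne_top _ _) (measure_ne_top _ _)] at h2
  linarith

lemma integrable_ind {s : Set Ω} (hs : MeasurableSet s) :
    Integrable (s.indicator (fun _ => (1:ℝ))) P :=
  (integrable_const (1:ℝ)).indicator hs

lemma integral_ind {s : Set Ω} (hs : MeasurableSet s) :
    ∫ ω, s.indicator (fun _ => (1:ℝ)) ω ∂P = (P s).toReal := by
  rw [integral_indicator_const (1:ℝ) hs, smul_eq_mul, mul_one]
  rfl

lemma pair_eq {A B : Set Ω} (μ0 : ℝ) :
    ∀ ω, (A.indicator (fun _ => (1:ℝ)) ω - μ0) * (B.indicator (fun _ => (1:ℝ)) ω - μ0)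
      = (A ∩ B).indicator (fun _ => (1:ℝ)) ω - μ0 * A.indicator (fun _ => (1:ℝ)) ω
        - μ0 * B.indicator (fun _ => (1:ℝ)) ω + μ0 * μ0 := by
  intro ω
  simp only [Set.indicator_apply, Set.mem_inter_iff]
  by_cases h1 : ω ∈ A <;> by_cases h2 : ω ∈ B <;> simp [h1, h2] <;> ring

/-- integral of the product of two centered indicators -/
lemma integral_pair_ind {A B : Set Ω} (hA : MeasurableSet A) (hB : MeasurableSet B) (μ0 : ℝ) :
    ∫ ω, (A.indicator (fun _ => (1:ℝ)) ω - μ0) * (B.indicator (fun _ => (1:ℝ)) ω - μ0) ∂P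
      = (P (A ∩ B)).toReal - μ0 * (P A).toReal - μ0 * (P B).toReal + μ0 * μ0 := by
  simp only [pair_eq μ0]
  rw [integral_add, integral_sub, integral_sub, integral_const_mul, integral_const_mul,
    integral_const, integral_ind P (hA.inter hB), integral_ind P hA, integral_ind P hB]
  · simp [measure_univ]
  · exact integrable_ind P (hA.inter hB)
  · exact (integrable_ind P hA).const_mul μ0
  · exact ((integrable_ind P (hA.inter hB)).sub ((integrable_ind P hA).const_mul μ0))
  · exact (integrable_ind P hB).const_mul μ0
  · exact (((integrable_ind P (hA.inter hB)).sub ((integrable_ind P hA).const_mul μ0)).sub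
      ((integrable_ind P hB).const_mul μ0))
  · exact integrable_const _

lemma integrable_pair_ind {A B : Set Ω} (hA : MeasurableSet A) (hB : MeasurableSet B) (μ0 : ℝ) :
    Integrable (fun ω =>
      (A.indicator (fun _ => (1:ℝ)) ω - μ0) * (B.indicator (fun _ => (1:ℝ)) ω - μ0)) P := by
  have hI : Integrable (fun ω => (A ∩ B).indicator (fun _ => (1:ℝ)) ω
      - μ0 * A.indicator (fun _ => (1:ℝ)) ω - μ0 * B.indicator (fun _ => (1:ℝ)) ω + μ0 * μ0) P :=
    (((integrable_ind P (hA.inter hB)).sub ((integrable_ind P hA).const_mul μ0)).sub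
      ((integrable_ind P hB).const_mul μ0)).add (integrable_const (μ0 * μ0))
  exact hI.congr (Filter.EventuallyEq.of_eq (funext fun ω => (pair_eq μ0 ω).symm))


end Ints

section Meas
variable {Ω : Type} [MeasurableSpace Ω] (P : Measure Ω) [IsProbabilityMeasure P]
  (Del : (ℓ : ℕ) → (Fin ℓ → Fin d) → Ω → Bool)

def surv (p : (ℓ : ℕ) × (Fin ℓ → Fin d)) : Set Ω := {ω | Del p.1 p.2 ω = false}

def conn {h : ℕ} (f : Fin h → Fin d) : Set Ω := ⋂ ℓ : Fin h, surv Del (kap f ℓ)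

omit [IsProbabilityMeasure P] in
lemma measurableSet_surv (hm : ∀ ℓ g, Measurable (Del ℓ g)) (p) :
    MeasurableSet (surv Del p) :=
  (hm p.1 p.2) (measurableSet_singleton false)

omit [IsProbabilityMeasure P] in
lemma measurableSet_conn (hm : ∀ ℓ g, Measurable (Del ℓ g)) {h : ℕ} (f : Fin h → Fin d) :
    MeasurableSet (conn Del f) :=
  MeasurableSet.iInter fun ℓ => measurableSet_surv Del hm _

variable {q : ℝ}

lemma meas_surv (hq1 : q ≤ 1)
    (hlaw : ∀ ℓ : ℕ, 1 ≤ ℓ → ∀ g : Fin ℓ → Fin d,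
      P {ω | Del ℓ g ω = true} = ENNReal.ofReal (1 - q))
    (hm : ∀ ℓ g, Measurable (Del ℓ g))
    (p : (ℓ : ℕ) × (Fin ℓ → Fin d)) (hp : 1 ≤ p.1) :
    P (surv Del p) = ENNReal.ofReal q := by
  have hc : surv Del p = {ω | Del p.1 p.2 ω = true}ᶜ := by
    ext ω; simp [surv]
  have hms : MeasurableSet {ω | Del p.1 p.2 ω = true} :=
    (hm p.1 p.2) (measurableSet_singleton true)
  rw [hc, measure_compl hms (measure_ne_top _ _),
    hlaw p.1 hp p.2, measure_univ, ← ENNReal.ofReal_one,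
    ← ENNReal.ofReal_sub _ (by linarith)]
  norm_num

lemma meas_biInter_surv
    (hindep : iIndepFun
      (fun p : (ℓ : ℕ) × (Fin ℓ → Fin d) => Del p.1 p.2) P)
    (S : Finset ((ℓ : ℕ) × (Fin ℓ → Fin d))) :
    P (⋂ p ∈ (S : Set ((ℓ : ℕ) × (Fin ℓ → Fin d))), surv Del p)
      = ∏ p ∈ S, P (surv Del p) := by
  have := hindep.meas_biInter (S := S) (s := fun p => surv Del p)
    (fun p _ => ⟨{false}, trivial, rfl⟩)
  simpa using this

lemma meas_conn {h : ℕ} (hh : 1 ≤ h) (hq1 : q ≤ 1)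
    (hlaw : ∀ ℓ : ℕ, 1 ≤ ℓ → ∀ g : Fin ℓ → Fin d,
      P {ω | Del ℓ g ω = true} = ENNReal.ofReal (1 - q))
    (hm : ∀ ℓ g, Measurable (Del ℓ g))
    (hindep : iIndepFun
      (fun p : (ℓ : ℕ) × (Fin ℓ → Fin d) => Del p.1 p.2) P)
    (f : Fin h → Fin d) :
    P (conn Del f) = ENNReal.ofReal q ^ h := by
  have hset : conn Del f
      = ⋂ p ∈ ((Finset.univ.image (kap f) : Finset _) : Set _), surv Del p := by
    ext ω
    simp [conn, Finset.mem_image]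
  rw [hset, meas_biInter_surv P Del hindep,
    Finset.prod_image (fun ℓ _ ℓ' _ hh' => kap_injective f hh')]
  rw [Finset.prod_congr rfl (fun ℓ _ => meas_surv P Del hq1 hlaw hm (kap f ℓ) (Nat.le_add_left 1 ℓ.1))]
  simp [Finset.prod_const]

lemma meas_conn_inter {h : ℕ} (hh : 1 ≤ h) (hq1 : q ≤ 1)
    (hlaw : ∀ ℓ : ℕ, 1 ≤ ℓ → ∀ g : Fin ℓ → Fin d,
      P {ω | Del ℓ g ω = true} = ENNReal.ofReal (1 - q))
    (hm : ∀ ℓ g, Measurable (Del ℓ g))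
    (hindep : iIndepFun
      (fun p : (ℓ : ℕ) × (Fin ℓ → Fin d) => Del p.1 p.2) P)
    (f g : Fin h → Fin d) :
    P (conn Del f ∩ conn Del g) = ENNReal.ofReal q ^ (2 * h - magree f g) := by
  have hset : conn Del f ∩ conn Del g
      = ⋂ p ∈ (((Finset.univ.image (kap f)) ∪ (Finset.univ.image (kap g)) : Finset _) : Set _),
          surv Del p := by
    ext ω
    simp only [conn, Set.mem_inter_iff, Set.mem_iInter, Finset.coe_union, Set.mem_union,
      Finset.coe_image, Set.mem_image, Finset.mem_coe, Finset.mem_univ, true_and,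
      Finset.coe_univ, Set.image_univ, Set.mem_range]
    constructor
    · rintro ⟨h1, h2⟩ p (⟨ℓ, rfl⟩ | ⟨ℓ, rfl⟩)
      · exact h1 ℓ
      · exact h2 ℓ
    · intro hall
      exact ⟨fun ℓ => hall _ (Or.inl ⟨ℓ, rfl⟩), fun ℓ => hall _ (Or.inr ⟨ℓ, rfl⟩)⟩
  rw [hset, meas_biInter_surv P Del hindep]
  have hone : ∀ p ∈ (Finset.univ.image (kap f)) ∪ (Finset.univ.image (kap g)), 1 ≤ p.1 := by
    intro p hp
    simp only [Finset.mem_union, Finset.mem_image, Finset.mem_univ, true_and] at hp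
    rcases hp with ⟨ℓ, rfl⟩ | ⟨ℓ, rfl⟩ <;> exact Nat.le_add_left 1 ℓ.1
  rw [Finset.prod_congr rfl (fun p hp => meas_surv P Del hq1 hlaw hm p (hone p hp)),
    Finset.prod_const, card_union_kap]

end Meas


section Main
variable {Ω : Type} [MeasurableSpace Ω]

lemma main_bound {d : ℕ} (hd : 2 ≤ d) {c ε : ℝ} (hc : 0 < c) (hε : 0 < ε)
    {h : ℕ} (hh : 1 ≤ h) (P : Measure Ω) [IsProbabilityMeasure P]
    (Del : (ℓ : ℕ) → (Fin ℓ → Fin d) → Ω → Bool)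
    (hm : ∀ ℓ g, Measurable (Del ℓ g))
    (hindep : iIndepFun
      (fun p : (ℓ : ℕ) × (Fin ℓ → Fin d) => Del p.1 p.2) P)
    (hlaw : ∀ ℓ : ℕ, 1 ≤ ℓ → ∀ g : Fin ℓ → Fin d,
      P {ω | Del ℓ g ω = true} = ENNReal.ofReal (1 - Real.exp (-(c / h)))) :
    P {ω | ε ≤ |((Set.ncard {f : Fin h → Fin d |
        1 ≤ eta d h (fun ℓ g => Del ℓ g ω) f} : ℕ) : ℝ) / (d : ℝ) ^ h -
        (1 - Real.exp (-c))|} ≤ ENNReal.ofReal ((Real.exp c - 1) / (ε ^ 2 * h)) := by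
  have hd0 : (0:ℝ) < (d:ℝ) := by positivity
  have hh0 : (0:ℝ) < (h:ℝ) := by exact_mod_cast hh
  set q : ℝ := Real.exp (-(c / h)) with hqdef
  have hq0 : 0 < q := Real.exp_pos _
  have hq1 : q ≤ 1 := Real.exp_le_one_iff.mpr (neg_nonpos.mpr (by positivity))
  have hqh : q ^ h = Real.exp (-c) := by
    rw [hqdef, ← Real.exp_nat_mul]
    congr 1
    field_simp
  set μ0 : ℝ := 1 - q ^ h with hμ0def
  set X : (Fin h → Fin d) → Ω → ℝ :=
    fun f => ((conn Del f)ᶜ : Set Ω).indicator (fun _ => (1:ℝ)) with hXdef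
  set ZZ : Ω → ℝ := fun ω => ∑ f : Fin h → Fin d, (X f ω - μ0) with hZZdef
  -- measure values
  have hconn : ∀ f : Fin h → Fin d, (P (conn Del f)).toReal = q ^ h := by
    intro f
    rw [meas_conn P Del hh hq1 hlaw hm hindep f, ENNReal.toReal_pow,
      ENNReal.toReal_ofReal hq0.le]
  have hconn2 : ∀ f g : Fin h → Fin d,
      (P (conn Del f ∩ conn Del g)).toReal = q ^ (2 * h - magree f g) := by
    intro f g
    rw [meas_conn_inter P Del hh hq1 hlaw hm hindep f g, ENNReal.toReal_pow,
      ENNReal.toReal_ofReal hq0.le]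
  have hmc : ∀ f : Fin h → Fin d, MeasurableSet (conn Del f) :=
    fun f => measurableSet_conn Del hm f
  -- integral of each pair term
  have hpair : ∀ f g : Fin h → Fin d,
      ∫ ω, (X f ω - μ0) * (X g ω - μ0) ∂P
        = q ^ (2 * h - magree f g) - (q ^ h) ^ 2 := by
    intro f g
    rw [hXdef]
    rw [integral_pair_ind P (hmc f).compl (hmc g).compl μ0]
    have e1 : (conn Del f)ᶜ ∩ (conn Del g)ᶜ = (conn Del f ∪ conn Del g)ᶜ :=
      (Set.compl_union _ _).symm
    rw [e1, toReal_compl P ((hmc f).union (hmc g)), toReal_union P (hmc g),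
      toReal_compl P (hmc f), toReal_compl P (hmc g), hconn f, hconn g, hconn2 f g,
      hμ0def]
    ring
  have hintpair : ∀ f g : Fin h → Fin d,
      Integrable (fun ω => (X f ω - μ0) * (X g ω - μ0)) P := by
    intro f g
    rw [hXdef]
    exact integrable_pair_ind P (hmc f).compl (hmc g).compl μ0
  -- pointwise identity for the count
  have hdisc : ∀ (f : Fin h → Fin d) (ω : Ω),
      (1 ≤ eta d h (fun ℓ g => Del ℓ g ω) f) ↔ ω ∈ (conn Del f)ᶜ := by
    intro f ω
    have heta : eta d h (fun ℓ g => Del ℓ g ω) f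
        = Set.ncard {ℓ : Fin h | Del (kap f ℓ).1 (kap f ℓ).2 ω = true} := rfl
    rw [heta, show (1 ≤ Set.ncard {ℓ : Fin h | Del (kap f ℓ).1 (kap f ℓ).2 ω = true})
        ↔ 0 < Set.ncard {ℓ : Fin h | Del (kap f ℓ).1 (kap f ℓ).2 ω = true} from
        Iff.rfl, Set.ncard_pos (Set.toFinite _)]
    simp only [Set.mem_compl_iff, conn, Set.mem_iInter, not_forall, surv,
      Set.Nonempty, Set.mem_setOf_eq, Bool.not_eq_false]
  have hcount : ∀ ω : Ω,
      ((Set.ncard {f : Fin h → Fin d |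
        1 ≤ eta d h (fun ℓ g => Del ℓ g ω) f} : ℕ) : ℝ) = ∑ f, X f ω := by
    intro ω
    rw [Set.ncard_eq_toFinset_card', Set.toFinset_setOf, Finset.card_filter]
    push_cast
    apply Finset.sum_congr rfl
    intro f _
    rw [hXdef]
    simp only [Set.indicator_apply]
    rw [if_congr (hdisc f ω) rfl rfl]
  -- rewrite the event
  have hcardF : (Fintype.card (Fin h → Fin d) : ℝ) = (d:ℝ) ^ h := by
    simp [Fintype.card_fun]
  have hW : ∀ ω : Ω,
      ((Set.ncard {f : Fin h → Fin d |
        1 ≤ eta d h (fun ℓ g => Del ℓ g ω) f} : ℕ) : ℝ) / (d : ℝ) ^ h -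
        (1 - Real.exp (-c)) = ZZ ω / (d:ℝ) ^ h := by
    intro ω
    rw [hcount ω, hZZdef]
    simp only [Finset.sum_sub_distrib, Finset.sum_const, Finset.card_univ, nsmul_eq_mul]
    rw [← hqh]
    field_simp
    ring_nf
    rw [hcardF, hμ0def]
    ring
  have hset : {ω : Ω | ε ≤ |((Set.ncard {f : Fin h → Fin d |
        1 ≤ eta d h (fun ℓ g => Del ℓ g ω) f} : ℕ) : ℝ) / (d : ℝ) ^ h -
        (1 - Real.exp (-c))|}
      = {ω : Ω | ε ^ 2 ≤ (fun ω => (ZZ ω / (d:ℝ) ^ h) ^ 2) ω} := by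
    ext ω
    simp only [Set.mem_setOf_eq, hW ω]
    rw [← sq_abs (ZZ ω / (d:ℝ) ^ h)]
    exact (pow_le_pow_iff_left₀ hε.le (abs_nonneg _) two_ne_zero).symm
  rw [hset]
  -- second moment computation
  have hZZsq : (fun ω => (ZZ ω / (d:ℝ) ^ h) ^ 2)
      = fun ω => (∑ fg : (Fin h → Fin d) × (Fin h → Fin d),
          (X fg.1 ω - μ0) * (X fg.2 ω - μ0)) * (((d:ℝ) ^ h) ^ 2)⁻¹ := by
    funext ω
    rw [div_pow, div_eq_mul_inv, hZZdef]
    congr 1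
    rw [sq, Finset.sum_mul_sum]
    exact (Fintype.sum_prod_type
      (f := fun fg : (Fin h → Fin d) × (Fin h → Fin d) => (X fg.1 ω - μ0) * (X fg.2 ω - μ0))).symm
  have hint : Integrable (fun ω => (ZZ ω / (d:ℝ) ^ h) ^ 2) P := by
    rw [hZZsq]
    exact (integrable_finset_sum _ (fun fg _ => hintpair fg.1 fg.2)).mul_const _
  have hIbound : ∫ ω, (ZZ ω / (d:ℝ) ^ h) ^ 2 ∂P ≤ (Real.exp c - 1) / h := by
    rw [hZZsq, integral_mul_const, integral_finset_sum _ (fun fg _ => hintpair fg.1 fg.2)]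
    have hterm : ∀ fg : (Fin h → Fin d) × (Fin h → Fin d),
        ∫ ω, (X fg.1 ω - μ0) * (X fg.2 ω - μ0) ∂P
          ≤ (magree fg.1 fg.2 : ℝ) * ((Real.exp c - 1) / h) := by
      intro fg
      rw [hpair fg.1 fg.2]
      set m := magree fg.1 fg.2 with hmdef
      have hmh : m ≤ h := magree_le fg.1 fg.2
      have e1 : (q ^ h) ^ 2 = q ^ (2 * h - m) * q ^ m := by
        rw [← pow_mul, ← pow_add]
        congr 1
        omega
      have h2 : q ^ (2 * h - m) ≤ 1 := pow_le_one₀ hq0.le hq1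
      have h3 : q ^ m ≤ 1 := pow_le_one₀ hq0.le hq1
      have hqm : q ^ m = Real.exp (-(c / h) * m) := by
        rw [hqdef, mul_comm, Real.exp_nat_mul]
      have h4 : 1 - q ^ m ≤ (c / h) * m := by
        rw [hqm]
        have := Real.add_one_le_exp (-(c / h) * (m:ℝ))
        nlinarith
      have h5 : c ≤ Real.exp c - 1 := by
        have := Real.add_one_le_exp c
        linarith
      calc q ^ (2 * h - m) - (q ^ h) ^ 2 = q ^ (2 * h - m) * (1 - q ^ m) := by
            rw [e1]; ring
        _ ≤ 1 * (1 - q ^ m) := by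
            apply mul_le_mul_of_nonneg_right h2
            nlinarith
        _ = 1 - q ^ m := one_mul _
        _ ≤ (c / h) * m := h4
        _ ≤ (m : ℝ) * ((Real.exp c - 1) / h) := by
            rw [div_mul_eq_mul_div, mul_comm c (m:ℝ), mul_div_assoc]
            gcongr
    have hsum : ∑ fg : (Fin h → Fin d) × (Fin h → Fin d),
        ∫ ω, (X fg.1 ω - μ0) * (X fg.2 ω - μ0) ∂P
          ≤ (d:ℝ) ^ (2 * h) * ((Real.exp c - 1) / h) := by
      calc ∑ fg : (Fin h → Fin d) × (Fin h → Fin d),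
            ∫ ω, (X fg.1 ω - μ0) * (X fg.2 ω - μ0) ∂P
          ≤ ∑ fg : (Fin h → Fin d) × (Fin h → Fin d),
              (magree fg.1 fg.2 : ℝ) * ((Real.exp c - 1) / h) :=
            Finset.sum_le_sum (fun fg _ => hterm fg)
        _ = (∑ fg : (Fin h → Fin d) × (Fin h → Fin d), (magree fg.1 fg.2 : ℝ))
              * ((Real.exp c - 1) / h) := by rw [← Finset.sum_mul]
        _ ≤ (d:ℝ) ^ (2 * h) * ((Real.exp c - 1) / h) := by
            apply mul_le_mul_of_nonneg_right (sum_magree_le hd h)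
            exact div_nonneg (by nlinarith [Real.add_one_le_exp c]) hh0.le
    have hpow : (((d:ℝ) ^ h) ^ 2)⁻¹ = ((d:ℝ) ^ (2 * h))⁻¹ := by
      rw [← pow_mul, mul_comm]
    calc (∑ fg : (Fin h → Fin d) × (Fin h → Fin d),
          ∫ ω, (X fg.1 ω - μ0) * (X fg.2 ω - μ0) ∂P) * (((d:ℝ) ^ h) ^ 2)⁻¹
        ≤ ((d:ℝ) ^ (2 * h) * ((Real.exp c - 1) / h)) * (((d:ℝ) ^ h) ^ 2)⁻¹ := by
          apply mul_le_mul_of_nonneg_right hsum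
          positivity
      _ = (Real.exp c - 1) / h := by
          rw [hpow]
          field_simp
  -- Markov
  have hmar := mul_meas_ge_le_integral_of_nonneg
    (ae_of_all P (fun ω => sq_nonneg (ZZ ω / (d:ℝ) ^ h))) hint (ε ^ 2)
  have hfin : (P {ω : Ω | ε ^ 2 ≤ (fun ω => (ZZ ω / (d:ℝ) ^ h) ^ 2) ω}).toReal
      ≤ (Real.exp c - 1) / (ε ^ 2 * h) := by
    have h1 : ε ^ 2 * (P {ω : Ω | ε ^ 2 ≤ (fun ω => (ZZ ω / (d:ℝ) ^ h) ^ 2) ω}).toReal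
        ≤ (Real.exp c - 1) / h := le_trans hmar hIbound
    have h2 : ε ^ 2 * (P {ω : Ω | ε ^ 2 ≤ (fun ω => (ZZ ω / (d:ℝ) ^ h) ^ 2) ω}).toReal * h
        ≤ Real.exp c - 1 := (le_div_iff₀ hh0).mp h1
    have h3 : (P {ω : Ω | ε ^ 2 ≤ (fun ω => (ZZ ω / (d:ℝ) ^ h) ^ 2) ω}).toReal * (ε ^ 2 * h)
        = ε ^ 2 * (P {ω : Ω | ε ^ 2 ≤ (fun ω => (ZZ ω / (d:ℝ) ^ h) ^ 2) ω}).toReal * h := by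
      ring
    rw [le_div_iff₀ (by positivity : (0:ℝ) < ε ^ 2 * (h:ℝ)), h3]
    exact h2
  calc P {ω : Ω | ε ^ 2 ≤ (fun ω => (ZZ ω / (d:ℝ) ^ h) ^ 2) ω}
      = ENNReal.ofReal ((P {ω : Ω | ε ^ 2 ≤ (fun ω => (ZZ ω / (d:ℝ) ^ h) ^ 2) ω}).toReal) :=
        (ENNReal.ofReal_toReal (measure_ne_top _ _)).symm
    _ ≤ ENNReal.ofReal ((Real.exp c - 1) / (ε ^ 2 * h)) := ENNReal.ofReal_le_ofReal hfin

end Main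

end RegTreeAux

theorem regular_tree_law_of_large_numbers
    (d : ℕ) (hd : 2 ≤ d) (c : ℝ) (hc : 0 < c)
    -- for each `h`, a probability space carrying the percolation on the `d`-regular tree
    (Ω : ℕ → Type) (mΩ : ∀ h, MeasurableSpace (Ω h))
    (P : ∀ h, Measure (Ω h)) (hP : ∀ h, IsProbabilityMeasure (P h))
    -- `Del h ℓ g = true` iff the edge joining the vertex `g` at height `ℓ` to its parent
    -- is deleted
    (Del : ∀ h : ℕ, (ℓ : ℕ) → (Fin ℓ → Fin d) → Ω h → Bool)
    (hDelmeas : ∀ h ℓ g, Measurable (Del h ℓ g))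
    -- the edges are deleted independently ...
    (hindep : ∀ h, iIndepFun
      (fun p : (ℓ : ℕ) × (Fin ℓ → Fin d) => Del h p.1 p.2) (P h))
    -- ... each with probability `1 - e^{-c/h}`
    (hlaw : ∀ h : ℕ, 1 ≤ h → ∀ ℓ : ℕ, 1 ≤ ℓ → ∀ g : Fin ℓ → Fin d,
      P h {ω | Del h ℓ g ω = true} = ENNReal.ofReal (1 - Real.exp (-(c / h)))) :
    -- conclusion: `d^{-h} ∇_h → 1 - e^{-c}` in probability
    ∀ ε : ℝ, 0 < ε →
      Tendsto (fun h : ℕ =>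
        P h {ω | ε ≤ |((Set.ncard {f : Fin h → Fin d |
            1 ≤ eta d h (fun ℓ g => Del h ℓ g ω) f} : ℕ) : ℝ) / (d : ℝ) ^ h -
          (1 - Real.exp (-c))|})
        atTop (𝓝 0) := by
  intro ε hε
  have hbound : ∀ h : ℕ, 1 ≤ h →
      P h {ω | ε ≤ |((Set.ncard {f : Fin h → Fin d |
          1 ≤ eta d h (fun ℓ g => Del h ℓ g ω) f} : ℕ) : ℝ) / (d : ℝ) ^ h -
        (1 - Real.exp (-c))|}
      ≤ ENNReal.ofReal ((Real.exp c - 1) / (ε ^ 2 * h)) := by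
    intro h hh
    haveI := hP h
    exact RegTreeAux.main_bound hd hc hε hh (P h) (Del h) (hDelmeas h) (hindep h) (hlaw h hh)
  have hupper : Tendsto (fun h : ℕ => ENNReal.ofReal ((Real.exp c - 1) / (ε ^ 2 * h)))
      atTop (𝓝 0) := by
    have hreal : Tendsto (fun h : ℕ => (Real.exp c - 1) / (ε ^ 2 * h)) atTop (𝓝 0) := by
      have h1 : Tendsto (fun h : ℕ => ((Real.exp c - 1) / ε ^ 2) / (h : ℝ)) atTop (𝓝 0) :=
        tendsto_const_div_atTop_nhds_zero_nat _
      convert h1 using 2 with h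
      rw [div_div]
    have h2 := ENNReal.tendsto_ofReal hreal
    simpa using h2
  apply tendsto_of_tendsto_of_tendsto_of_le_of_le' tendsto_const_nhds hupper
  · exact Filter.Eventually.of_forall (fun h => by simp)
  · filter_upwards [Filter.eventually_ge_atTop 1] with h hh
    exact hbound h hh

end
end

section
/- Let c > 0 and p_n = 1 - c/ln n. Let T_n be a uniform random recursive tree on [n], let G_n be the size of the root cluster after Bernoulli bond percolation with parameter p_n on T_n, let u_n be a uniformly chosen vertex of [n] independent of the percolation, and let h_n be the graph distance from u_n to the root in T_n. Then E(n^{-1} G_n) = E( (1 - c/ln n)^{h_n} ), and consequently E(n^{-1} G_n) → e^{-c} as n → ∞. -/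
/-!
STATEMENT 19.  For percolation with parameter `p_n = 1 - c / log n` on a uniform random
recursive tree of size `n`, with `G_n` the size of the root cluster, `u_n` an independent
uniform vertex and `h_n` its height: `E(n⁻¹ G_n) = E((1 - c / log n)^{h_n})`, and
consequently `E(n⁻¹ G_n) → e^{-c}`.
-/

open MeasureTheory ProbabilityTheory Filter Real Topology
open scoped ENNReal NNReal

noncomputable section

/-- `connToRoot par del i = true` iff vertex `i` of the tree is connected to the root `1`
after deleting the marked edges.  Here, for `m ≥ 2`, `par m` is the parent of vertex `m`
(a recursive tree has `par m < m`), and `del m = true` means that the edge joining `m`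
to its parent is deleted. -/
def connToRoot (par : ℕ → ℕ) (del : ℕ → Bool) : ℕ → Bool
  | 0 => true
  | 1 => true
  | (i + 2) => !(del (i + 2)) && connToRoot par del (min (par (i + 2)) (i + 1))
termination_by i => i
decreasing_by simp_wf

/-- `depthToRoot par i` is the graph distance from vertex `i` to the root `1` in the
recursive tree with parent function `par`. -/
def depthToRoot (par : ℕ → ℕ) : ℕ → ℕ
  | 0 => 0
  | 1 => 0
  | (i + 2) => depthToRoot par (min (par (i + 2)) (i + 1)) + 1
termination_by i => i
decreasing_by simp_wf

lemma measurable_apply_nat {Ω β : Type*} [MeasurableSpace Ω] [MeasurableSpace β]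
    {F : ℕ → Ω → β} (hF : ∀ j, Measurable (F j)) {m : Ω → ℕ} (hm : Measurable m) :
    Measurable (fun ω => F (m ω) ω) := by
  have h1 : Measurable (fun q : Ω × ℕ => F q.2 q.1) :=
    measurable_from_prod_countable_left (fun j => hF j)
  exact h1.comp (measurable_id.prodMk hm)

lemma measurable_bool_and {Ω : Type*} [MeasurableSpace Ω] {f g : Ω → Bool}
    (hf : Measurable f) (hg : Measurable g) : Measurable (fun ω => f ω && g ω) :=
  (measurable_of_countable (fun q : Bool × Bool => q.1 && q.2)).comp (hf.prodMk hg)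

lemma measurable_connToRoot {Ω : Type*} [MeasurableSpace Ω]
    (par : ℕ → Ω → ℕ) (del : ℕ → Ω → Bool)
    (hpar : ∀ m, Measurable (par m)) (hdel : ∀ m, Measurable (del m)) :
    ∀ i, Measurable (fun ω => connToRoot (fun m => par m ω) (fun m => del m ω) i) := by
  intro i
  induction i using Nat.strong_induction_on with
  | _ i ih =>
    match i with
    | 0 => simpa [connToRoot] using measurable_const
    | 1 => simpa [connToRoot] using measurable_const
    | (i + 2) =>
      have : (fun ω => connToRoot (fun m => par m ω) (fun m => del m ω) (i + 2)) =
          (fun ω => !(del (i+2) ω) &&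
            (fun j ω => connToRoot (fun m => par m ω) (fun m => del m ω) j)
              (min (par (i+2) ω) (i+1)) ω) := by
        funext ω; rw [connToRoot]
      rw [this]
      have hA : Measurable (fun ω => !(del (i+2) ω)) :=
        (measurable_of_countable Bool.not).comp (hdel (i+2))
      have hB : Measurable (fun ω =>
          (fun j ω => connToRoot (fun m => par m ω) (fun m => del m ω) (min j (i+1)))
            (par (i+2) ω) ω) := by
        apply measurable_apply_nat
          (F := fun j ω => connToRoot (fun m => par m ω) (fun m => del m ω) (min j (i+1)))
        · intro j
          exact ih (min j (i+1)) (by omega)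
        · exact hpar (i+2)
      exact measurable_bool_and hA hB

lemma measurable_depthToRoot {Ω : Type*} [MeasurableSpace Ω]
    (par : ℕ → Ω → ℕ) (hpar : ∀ m, Measurable (par m)) :
    ∀ i, Measurable (fun ω => depthToRoot (fun m => par m ω) i) := by
  intro i
  induction i using Nat.strong_induction_on with
  | _ i ih =>
    match i with
    | 0 => simp only [depthToRoot]; exact measurable_const
    | 1 => simp only [depthToRoot]; exact measurable_const
    | (i + 2) =>
      have : (fun ω => depthToRoot (fun m => par m ω) (i + 2)) =
          (fun ω => (fun j ω => depthToRoot (fun m => par m ω) (min j (i+1)))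
            (par (i+2) ω) ω + 1) := by
        funext ω; rw [depthToRoot]
      rw [this]
      exact (measurable_apply_nat
        (F := fun j ω => depthToRoot (fun m => par m ω) (min j (i+1)))
        (fun j => ih (min j (i+1)) (by omega)) (hpar (i+2))).add measurable_const

lemma connToRoot_congr (par par' : ℕ → ℕ) (del del' : ℕ → Bool) :
    ∀ i, (∀ m, 2 ≤ m → m ≤ i → par m = par' m ∧ del m = del' m) →
      connToRoot par del i = connToRoot par' del' i := by
  intro i
  induction i using Nat.strong_induction_on with
  | _ i ih =>
    match i with
    | 0 => intro _; rw [connToRoot, connToRoot]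
    | 1 => intro _; rw [connToRoot, connToRoot]
    | (i + 2) =>
      intro hag
      rw [connToRoot, connToRoot]
      have h2 := hag (i+2) (by omega) le_rfl
      rw [h2.1, h2.2]
      congr 1
      exact ih (min (par' (i+2)) (i+1)) (by omega)
        (fun m hm1 hm2 => hag m hm1 (by omega))

lemma depthToRoot_congr (par par' : ℕ → ℕ) :
    ∀ i, (∀ m, 2 ≤ m → m ≤ i → par m = par' m) →
      depthToRoot par i = depthToRoot par' i := by
  intro i
  induction i using Nat.strong_induction_on with
  | _ i ih =>
    match i with
    | 0 => intro _; rw [depthToRoot, depthToRoot]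
    | 1 => intro _; rw [depthToRoot, depthToRoot]
    | (i + 2) =>
      intro hag
      rw [depthToRoot, depthToRoot]
      rw [hag (i+2) (by omega) le_rfl]
      congr 1
      exact ih (min (par' (i+2)) (i+1)) (by omega)
        (fun m hm1 hm2 => hag m hm1 (by omega))

lemma depthToRoot_le (par : ℕ → ℕ) : ∀ i, depthToRoot par i ≤ i := by
  intro i
  induction i using Nat.strong_induction_on with
  | _ i ih =>
    match i with
    | 0 => simp [depthToRoot]
    | 1 => simp [depthToRoot]
    | (i + 2) =>
      rw [depthToRoot]
      have := ih (min (par (i+2)) (i+1)) (by omega)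
      omega


lemma sum_inv_sq_le (n : ℕ) :
    ∑ k ∈ Finset.Icc 1 n, (1 / ((k : ℝ) + 1)) ^ 2 ≤ 1 := by
  have key : ∀ m : ℕ, ∑ k ∈ Finset.Icc 1 m, (1 / ((k : ℝ) + 1)) ^ 2 ≤ 1 - 1 / ((m : ℝ) + 1) := by
    intro m
    induction m with
    | zero => simp
    | succ m ih =>
      rw [Finset.sum_Icc_succ_top (by omega)]
      have h1 : (1 / ((m : ℝ) + 1 + 1)) ^ 2 ≤ 1 / ((m:ℝ)+1) - 1 / ((m:ℝ)+1+1) := by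
        have hm1 : (0:ℝ) < (m:ℝ) + 1 := by positivity
        have hm2 : (0:ℝ) < (m:ℝ) + 1 + 1 := by positivity
        rw [div_sub_div _ _ (ne_of_gt hm1) (ne_of_gt hm2)]
        rw [div_pow, one_pow, div_le_div_iff₀ (by positivity) (by positivity)]
        nlinarith [sq_nonneg ((m:ℝ)+1)]
      push_cast
      linarith
  have h := key n
  have : (0:ℝ) < 1/((n:ℝ)+1) := by positivity
  linarith

lemma log_one_sub_bounds {x : ℝ} (hx0 : 0 ≤ x) (hx : x ≤ 1/2) :
    -x - 2 * x ^ 2 ≤ Real.log (1 - x) ∧ Real.log (1 - x) ≤ -x := by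
  have h1 : (0:ℝ) < 1 - x := by linarith
  constructor
  · have h2 : Real.log (1 - x)⁻¹ ≤ (1 - x)⁻¹ - 1 := Real.log_le_sub_one_of_pos (by positivity)
    rw [Real.log_inv] at h2
    have h3 : (1 - x)⁻¹ - 1 = x / (1 - x) := by field_simp; ring
    have h4 : x / (1 - x) ≤ x + 2 * x ^ 2 := by
      rw [div_le_iff₀ h1]; nlinarith
    nlinarith
  · have := Real.log_le_sub_one_of_pos h1
    linarith

lemma prod_ratio_shift (p : ℝ) (n : ℕ) (hn : 1 ≤ n) :
    (∏ k ∈ Finset.Icc 1 (n-1), ((k : ℝ) + p) / k) / n =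
      ∏ k ∈ Finset.Icc 1 (n-1), ((k : ℝ) + p) / ((k : ℝ) + 1) := by
  have hprod : ∀ m : ℕ, ∏ k ∈ Finset.Icc 1 m, (((k : ℝ) + 1) / k) = (m : ℝ) + 1 := by
    intro m
    induction m with
    | zero => simp
    | succ m ih =>
      rw [Finset.prod_Icc_succ_top (by omega), ih]
      have : ((m:ℝ) + 1) ≠ 0 := by positivity
      push_cast
      field_simp
  have key : ∏ k ∈ Finset.Icc 1 (n-1), ((k : ℝ) + p) / k =
      (∏ k ∈ Finset.Icc 1 (n-1), ((k : ℝ) + p) / ((k : ℝ) + 1)) * n := by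
    have := hprod (n-1)
    have hn1 : ((n:ℝ) - 1) + 1 = (n:ℝ) := by ring
    have hcast : ((n-1 : ℕ) : ℝ) + 1 = (n : ℝ) := by
      have : (n - 1 : ℕ) + 1 = n := by omega
      rw [← this]; push_cast; ring
    rw [hcast] at this
    rw [← this, ← Finset.prod_mul_distrib]
    apply Finset.prod_congr rfl
    intro k hk
    have hk1 : 1 ≤ k := (Finset.mem_Icc.mp hk).1
    have hk0 : (k:ℝ) ≠ 0 := by positivity
    have hk0' : (k:ℝ) + 1 ≠ 0 := by positivity
    field_simp
  rw [key]
  have hn0 : (n:ℝ) ≠ 0 := by positivity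
  field_simp

lemma H_bounds (n : ℕ) (hn : 1 ≤ n) :
    Real.log ((n:ℝ)+1) - 1 ≤ ∑ k ∈ Finset.Icc 1 (n-1), 1 / ((k:ℝ)+1) ∧
    ∑ k ∈ Finset.Icc 1 (n-1), 1 / ((k:ℝ)+1) ≤ Real.log n := by
  induction n with
  | zero => omega
  | succ n ih =>
    rcases Nat.eq_or_lt_of_le hn with h1 | h1
    · simp only [← h1]
      norm_num
      have h2 : Real.log 2 ≤ 2 - 1 := Real.log_le_sub_one_of_pos (by norm_num)
      linarith
    · have hn' : 1 ≤ n := by omega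
      obtain ⟨ihl, ihr⟩ := ih hn'
      have hstep : (n + 1 - 1 : ℕ) = (n - 1) + 1 := by omega
      rw [hstep, Finset.sum_Icc_succ_top (by omega)]
      have hcast : ((n - 1 + 1 : ℕ) : ℝ) + 1 = (n : ℝ) + 1 := by
        have h0 : (n - 1 + 1 : ℕ) = n := by omega
        rw [h0]
      rw [hcast]
      have hnpos : (0:ℝ) < n := by exact_mod_cast hn'
      have hn1pos : (0:ℝ) < (n:ℝ) + 1 := by linarith
      have hn2pos : (0:ℝ) < (n:ℝ) + 2 := by linarith
      have hub : Real.log ((n:ℝ)+1) - Real.log n ≥ 1 / ((n:ℝ)+1) := by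
        have h := Real.log_le_sub_one_of_pos (show (0:ℝ) < (n:ℝ)/((n:ℝ)+1) by positivity)
        rw [Real.log_div (ne_of_gt hnpos) (ne_of_gt hn1pos)] at h
        have : (n:ℝ)/((n:ℝ)+1) - 1 = -(1/((n:ℝ)+1)) := by field_simp; ring
        rw [this] at h
        linarith
      have hub2 : Real.log ((n:ℝ)+2) - Real.log ((n:ℝ)+1) ≤ 1 / ((n:ℝ)+1) := by
        have h := Real.log_le_sub_one_of_pos (show (0:ℝ) < ((n:ℝ)+2)/((n:ℝ)+1) by positivity)
        rw [Real.log_div (ne_of_gt hn2pos) (ne_of_gt hn1pos)] at h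
        have heq : ((n:ℝ)+2)/((n:ℝ)+1) - 1 = 1/((n:ℝ)+1) := by
          field_simp
          norm_num
        rw [heq] at h
        linarith
      constructor
      · have : ((n+1 : ℕ) : ℝ) + 1 = (n:ℝ) + 2 := by push_cast; ring
        rw [this]
        linarith
      · push_cast
        linarith

lemma prod_tendsto (c : ℝ) (hc : 0 < c) :
    Tendsto (fun n : ℕ => ∏ k ∈ Finset.Icc 1 (n-1),
        (((k:ℝ) + (1 - c / Real.log n)) / ((k:ℝ)+1)))
      atTop (𝓝 (Real.exp (-c))) := by
  set ε : ℕ → ℝ := fun n => c / Real.log n with hε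
  set H : ℕ → ℝ := fun n => ∑ k ∈ Finset.Icc 1 (n-1), 1/((k:ℝ)+1) with hH
  set S : ℕ → ℝ := fun n => ∑ k ∈ Finset.Icc 1 (n-1),
      Real.log (1 - ε n / ((k:ℝ)+1)) with hS
  have hlog : Tendsto (fun n : ℕ => Real.log n) atTop atTop :=
    Real.tendsto_log_atTop.comp tendsto_natCast_atTop_atTop
  have hε0 : Tendsto ε atTop (𝓝 0) := tendsto_const_nhds.div_atTop hlog
  have hev : ∀ᶠ n : ℕ in atTop, 1 ≤ n ∧ 1 ≤ Real.log n ∧ 0 < ε n ∧ ε n ≤ 1/2 := by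
    filter_upwards [hlog.eventually_ge_atTop (max 1 (2*c)), eventually_ge_atTop 1] with n h1 h2
    have hl1 : 1 ≤ Real.log n := le_trans (le_max_left _ _) h1
    have hl2 : 2*c ≤ Real.log n := le_trans (le_max_right _ _) h1
    have hlpos : 0 < Real.log n := by linarith
    refine ⟨h2, hl1, by positivity, ?_⟩
    rw [div_le_iff₀ hlpos]; linarith
  -- bounds on each term
  have hterm : ∀ᶠ n : ℕ in atTop, ∀ k ∈ Finset.Icc 1 (n-1),
      (0 ≤ ε n / ((k:ℝ)+1) ∧ ε n / ((k:ℝ)+1) ≤ 1/2) := by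
    filter_upwards [hev] with n ⟨_, _, hε1, hε2⟩ k hk
    have hk1 : (0:ℝ) < (k:ℝ) + 1 := by positivity
    constructor
    · positivity
    · calc ε n / ((k:ℝ)+1) ≤ ε n / 1 := by
            apply div_le_div_of_nonneg_left (le_of_lt hε1) (by norm_num) (by linarith)
        _ = ε n := div_one _
        _ ≤ 1/2 := hε2
  -- εH → c
  have hεH : Tendsto (fun n => ε n * H n) atTop (𝓝 c) := by
    have hlow : Tendsto (fun n : ℕ => c - ε n) atTop (𝓝 c) := by
      simpa using (tendsto_const_nhds (x := c)).sub hε0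
    apply tendsto_of_tendsto_of_tendsto_of_le_of_le' hlow tendsto_const_nhds
    · filter_upwards [hev] with n ⟨hn1, hl1, hε1, _⟩
      have hb := (H_bounds n hn1).1
      have hlogn1 : Real.log n ≤ Real.log ((n:ℝ)+1) := by
        apply Real.log_le_log (by exact_mod_cast Nat.pos_of_ne_zero (by omega))
        linarith
      have : Real.log n - 1 ≤ H n := by linarith
      have h2 : ε n * (Real.log n - 1) ≤ ε n * H n :=
        mul_le_mul_of_nonneg_left this (le_of_lt hε1)
      have h3 : ε n * Real.log n = c := by
        rw [hε]; field_simp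
      nlinarith
    · filter_upwards [hev] with n ⟨hn1, hl1, hε1, _⟩
      have hb := (H_bounds n hn1).2
      have h2 : ε n * H n ≤ ε n * Real.log n :=
        mul_le_mul_of_nonneg_left hb (le_of_lt hε1)
      have h3 : ε n * Real.log n = c := by
        rw [hε]; field_simp
      linarith
  -- S → -c
  have hSten : Tendsto S atTop (𝓝 (-c)) := by
    have hlow : Tendsto (fun n => -(ε n * H n) - 2 * (ε n)^2) atTop (𝓝 (-c)) := by
      have h1 : Tendsto (fun n => -(ε n * H n)) atTop (𝓝 (-c)) := hεH.neg
      have h2 : Tendsto (fun n => 2 * (ε n)^2) atTop (𝓝 0) := by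
        have := (hε0.mul hε0).const_mul (2:ℝ)
        simpa [pow_two, mul_assoc] using this
      simpa using h1.sub h2
    apply tendsto_of_tendsto_of_tendsto_of_le_of_le' hlow hεH.neg
    · -- lower bound on S
      filter_upwards [hterm, hev] with n hts ⟨hn1, _, hε1, _⟩
      have hsum2 : ∑ k ∈ Finset.Icc 1 (n-1), (ε n / ((k:ℝ)+1))^2 ≤ (ε n)^2 := by
        have : ∀ k ∈ Finset.Icc 1 (n-1),
            (ε n / ((k:ℝ)+1))^2 = (ε n)^2 * (1/((k:ℝ)+1))^2 := by
          intro k _; rw [div_pow, one_div, inv_pow, div_eq_mul_inv]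
        rw [Finset.sum_congr rfl this, ← Finset.mul_sum]
        have h4 := sum_inv_sq_le (n-1)
        nlinarith [sq_nonneg (ε n)]
      have hmain : ∀ k ∈ Finset.Icc 1 (n-1),
          -(ε n / ((k:ℝ)+1)) - 2 * (ε n / ((k:ℝ)+1))^2 ≤ Real.log (1 - ε n/((k:ℝ)+1)) := by
        intro k hk
        exact (log_one_sub_bounds (hts k hk).1 (hts k hk).2).1
      have h5 := Finset.sum_le_sum hmain
      have hHsum : ε n * H n = ∑ k ∈ Finset.Icc 1 (n-1), ε n / ((k:ℝ)+1) := by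
        rw [hH, Finset.mul_sum]
        exact Finset.sum_congr rfl (fun k _ => mul_one_div _ _)
      have h6 : ∑ k ∈ Finset.Icc 1 (n-1),
          (-(ε n / ((k:ℝ)+1)) - 2 * (ε n / ((k:ℝ)+1))^2)
          = -(ε n * H n) - 2 * ∑ k ∈ Finset.Icc 1 (n-1), (ε n / ((k:ℝ)+1))^2 := by
        rw [Finset.sum_sub_distrib]
        congr 1
        · rw [hHsum, Finset.sum_neg_distrib]
        · rw [Finset.mul_sum]
      rw [h6] at h5
      calc -(ε n * H n) - 2 * (ε n)^2
          ≤ -(ε n * H n) - 2 * ∑ k ∈ Finset.Icc 1 (n-1), (ε n / ((k:ℝ)+1))^2 := by linarith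
        _ ≤ S n := h5
    · -- upper bound on S
      filter_upwards [hterm] with n hts
      have hmain : ∀ k ∈ Finset.Icc 1 (n-1),
          Real.log (1 - ε n/((k:ℝ)+1)) ≤ -(ε n / ((k:ℝ)+1)) := by
        intro k hk
        exact (log_one_sub_bounds (hts k hk).1 (hts k hk).2).2
      have h5 := Finset.sum_le_sum hmain
      have hHsum : ε n * H n = ∑ k ∈ Finset.Icc 1 (n-1), ε n / ((k:ℝ)+1) := by
        rw [hH, Finset.mul_sum]
        exact Finset.sum_congr rfl (fun k _ => mul_one_div _ _)
      have h6 : ∑ k ∈ Finset.Icc 1 (n-1), -(ε n / ((k:ℝ)+1)) = -(ε n * H n) := by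
        rw [hHsum, Finset.sum_neg_distrib]
      rw [h6] at h5
      exact h5
  -- conclude
  have hfinal : ∀ᶠ n : ℕ in atTop, Real.exp (S n) = ∏ k ∈ Finset.Icc 1 (n-1),
      (((k:ℝ) + (1 - c / Real.log n)) / ((k:ℝ)+1)) := by
    filter_upwards [hterm] with n hts
    rw [hS, Real.exp_sum]
    apply Finset.prod_congr rfl
    intro k hk
    have h1 : (0:ℝ) < 1 - ε n / ((k:ℝ)+1) := by
      have := (hts k hk).2; linarith
    rw [Real.exp_log h1]
    have hk1 : ((k:ℝ)+1) ≠ 0 := by positivity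
    have halg : ∀ e x : ℝ, x + 1 ≠ 0 → 1 - e/(x+1) = (x + (1 - e))/(x+1) := by
      intro e x hx
      field_simp
      ring
    exact halg (c / Real.log n) (k:ℝ) hk1
  have := (Real.continuous_exp.tendsto (-c)).comp hSten
  exact this.congr' hfinal

lemma integrable_of_bdd {Ω : Type*} [MeasurableSpace Ω] {P : Measure Ω} [IsProbabilityMeasure P]
    {f : Ω → ℝ} (hf : Measurable f) (M : ℝ) (hM : ∀ ω, |f ω| ≤ M) : Integrable f P :=
  (integrable_const M).mono' hf.aestronglyMeasurable (Filter.Eventually.of_forall hM)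

lemma indep_of_finset_rep {Ω : Type*} [MeasurableSpace Ω] {P : Measure Ω}
    (X : ℕ → Ω → ℕ × Bool) (hmeas : ∀ m, Measurable (X m))
    (hindep : iIndepFun X P)
    {β : Type*} [MeasurableSpace β] (m0 : ℕ) (S : Finset ℕ) (hS : m0 ∉ S)
    (Y : Ω → β) (g : ((k : S) → ℕ × Bool) → β) (hg : Measurable g)
    (hYg : ∀ ω, Y ω = g (fun k => X k ω)) :
    IndepFun (X m0) Y P := by
  have h1 : IndepFun (fun ω (k : ({m0} : Finset ℕ)) => X k ω)
      (fun ω (k : S) => X k ω) P :=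
    hindep.indepFun_finset {m0} S (by simpa using hS) hmeas
  have h2 := h1.comp
    (φ := fun v : ((k : ({m0} : Finset ℕ)) → ℕ × Bool) => v ⟨m0, by simp⟩)
    (ψ := g) (measurable_pi_apply _ :
      Measurable fun v : ((k : ({m0} : Finset ℕ)) → ℕ × Bool) => v ⟨m0, by simp⟩) hg
  have hfun1 : (fun v : ((k : ({m0} : Finset ℕ)) → ℕ × Bool) => v ⟨m0, by simp⟩) ∘
      (fun ω (k : ({m0} : Finset ℕ)) => X k ω) = X m0 := rfl
  have hfun2 : g ∘ (fun ω (k : S) => X k ω) = Y := by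
    funext ω; exact (hYg ω).symm
  rwa [hfun1, hfun2] at h2

section Core

variable {Ω : Type*} [MeasurableSpace Ω] (P : Measure Ω) [IsProbabilityMeasure P]
  (c : ℝ) (n : ℕ) (U : ℕ → Ω → ℕ) (Del : ℕ → Ω → Bool) (u : Ω → ℕ)

lemma core_lemma (hc : 0 < c) (hn : c ≤ Real.log n)
    (hU : ∀ m, Measurable (U m)) (hD : ∀ m, Measurable (Del m)) (hu : Measurable u)
    (hindep : iIndepFun
      (fun m ω => if m = 0 then (u ω, false) else (U m ω, Del m ω)) P)
    (hlaw : ∀ m : ℕ, 2 ≤ m → m ≤ n → ∀ j ∈ Finset.Icc 1 (m - 1), ∀ b : Bool,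
      P {ω | U m ω = j ∧ Del m ω = b} =
        (((m - 1 : ℕ) : ℝ≥0∞))⁻¹ *
          (if b then ENNReal.ofReal (c / Real.log n)
            else ENNReal.ofReal (1 - c / Real.log n)))
    (hulaw : ∀ j ∈ Finset.Icc 1 n, P {ω | u ω = j} = ((n : ℝ≥0∞))⁻¹) :
    (∫ ω, (Set.ncard {i : ℕ | 1 ≤ i ∧ i ≤ n ∧
        connToRoot (fun m => U m ω) (fun m => Del m ω) i = true} : ℝ) / n ∂P
      = ∫ ω, (1 - c / Real.log n) ^ (depthToRoot (fun m => U m ω) (u ω)) ∂P)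
    ∧ ∫ ω, (Set.ncard {i : ℕ | 1 ≤ i ∧ i ≤ n ∧
        connToRoot (fun m => U m ω) (fun m => Del m ω) i = true} : ℝ) / n ∂P
      = (∏ k ∈ Finset.Icc 1 (n-1), ((k : ℝ) + (1 - c / Real.log n)) / k) / n := by
  have hlogpos : 0 < Real.log n := lt_of_lt_of_le hc hn
  have hn2 : 2 ≤ n := by
    by_contra hcon
    interval_cases n <;> simp_all <;> norm_num at hlogpos
  set p : ℝ := 1 - c / Real.log n with hp
  have hp0 : 0 ≤ p := by
    rw [hp, sub_nonneg, div_le_one hlogpos]; exact hn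
  have hp1 : p ≤ 1 := by
    rw [hp]; have : 0 ≤ c / Real.log n := by positivity
    linarith
  set X : ℕ → Ω → ℕ × Bool :=
    fun m ω => if m = 0 then (u ω, false) else (U m ω, Del m ω) with hX
  have hXmeas : ∀ m, Measurable (X m) := by
    intro m
    by_cases h : m = 0
    · subst h; simpa [hX] using (hu.prodMk measurable_const)
    · simpa [hX, h] using ((hU m).prodMk (hD m))
  set C : ℕ → Ω → Bool :=
    fun i ω => connToRoot (fun m => U m ω) (fun m => Del m ω) i with hC
  set D : ℕ → Ω → ℕ := fun i ω => depthToRoot (fun m => U m ω) i with hD2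
  have hCmeas : ∀ i, Measurable (C i) := fun i => measurable_connToRoot U Del hU hD i
  have hDmeas : ∀ i, Measurable (D i) := fun i => measurable_depthToRoot U hU i
  have hXm : ∀ m, m ≠ 0 → ∀ ω, X m ω = (U m ω, Del m ω) := by
    intro m hm ω; simp [hX, hm]
  -- independence
  have hCrep : ∀ i j : ℕ, j ≤ i + 1 → IndepFun (X (i+2)) (C j) P := by
    intro i j hj
    refine indep_of_finset_rep X hXmeas hindep (i+2) (Finset.Iic (i+1)) (by simp) (C j)
      (fun v => connToRoot
        (fun m => (if h : m ∈ Finset.Iic (i+1) then v ⟨m, h⟩ else ((0:ℕ), false)).1)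
        (fun m => (if h : m ∈ Finset.Iic (i+1) then v ⟨m, h⟩ else ((0:ℕ), false)).2) j) ?_ ?_
    · apply measurable_connToRoot
      · intro m
        by_cases h : m ∈ Finset.Iic (i+1)
        · simp only [dif_pos h]
          exact (measurable_pi_apply _).fst
        · simp only [dif_neg h]
          exact measurable_const
      · intro m
        by_cases h : m ∈ Finset.Iic (i+1)
        · simp only [dif_pos h]
          exact (measurable_pi_apply _).snd
        · simp only [dif_neg h]
          exact measurable_const
    · intro ω
      apply connToRoot_congr
      intro m hm2 hmj
      have hmem : m ∈ Finset.Iic (i+1) := Finset.mem_Iic.mpr (le_trans hmj hj)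
      have hm0 : m ≠ 0 := by omega
      simp [dif_pos hmem, hX, hm0, Finset.mem_Iic.mp hmem]
  have hDrep : ∀ i j : ℕ, j ≤ i + 1 → IndepFun (X (i+2)) (D j) P := by
    intro i j hj
    refine indep_of_finset_rep X hXmeas hindep (i+2) (Finset.Iic (i+1)) (by simp) (D j)
      (fun v => depthToRoot
        (fun m => (if h : m ∈ Finset.Iic (i+1) then v ⟨m, h⟩ else ((0:ℕ), false)).1) j) ?_ ?_
    · apply measurable_depthToRoot
      intro m
      by_cases h : m ∈ Finset.Iic (i+1)
      · simp only [dif_pos h]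
        exact (measurable_pi_apply _).fst
      · simp only [dif_neg h]
        exact measurable_const
    · intro ω
      apply depthToRoot_congr
      intro m hm2 hmj
      have hmem : m ∈ Finset.Iic (i+1) := Finset.mem_Iic.mpr (le_trans hmj hj)
      have hm0 : m ≠ 0 := by omega
      simp [dif_pos hmem, hX, hm0, Finset.mem_Iic.mp hmem]
  have hDrep0 : ∀ j : ℕ, IndepFun (X 0) (D j) P := by
    intro j
    refine indep_of_finset_rep X hXmeas hindep 0 (Finset.Icc 1 j) (by simp) (D j)
      (fun v => depthToRoot
        (fun m => (if h : m ∈ Finset.Icc 1 j then v ⟨m, h⟩ else ((0:ℕ), false)).1) j) ?_ ?_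
    · apply measurable_depthToRoot
      intro m
      by_cases h : m ∈ Finset.Icc 1 j
      · simp only [dif_pos h]
        exact (measurable_pi_apply _).fst
      · simp only [dif_neg h]
        exact measurable_const
    · intro ω
      apply depthToRoot_congr
      intro m hm2 hmj
      have hmem : m ∈ Finset.Icc 1 j := Finset.mem_Icc.mpr ⟨by omega, hmj⟩
      have hm0 : m ≠ 0 := by omega
      simp [dif_pos hmem, hX, hm0, (Finset.mem_Icc.mp hmem).1, (Finset.mem_Icc.mp hmem).2]
  -- laws
  have hmeasUD : ∀ (m j : ℕ) (b : Bool),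
      MeasurableSet {ω | U m ω = j ∧ Del m ω = b} := by
    intro m j b
    exact (hU m (measurableSet_singleton j)).inter (hD m (measurableSet_singleton b))
  have hUj : ∀ m : ℕ, 2 ≤ m → m ≤ n → ∀ j ∈ Finset.Icc 1 (m-1),
      P {ω | U m ω = j} = (((m - 1 : ℕ) : ℝ≥0∞))⁻¹ := by
    intro m hm2 hmn j hj
    have hsplit : {ω | U m ω = j} =
        {ω | U m ω = j ∧ Del m ω = false} ∪ {ω | U m ω = j ∧ Del m ω = true} := by
      ext ω
      simp only [Set.mem_union, Set.mem_setOf_eq]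
      rcases Bool.dichotomy (Del m ω) with hb | hb <;> simp [hb]
    have hdisj : Disjoint {ω | U m ω = j ∧ Del m ω = false}
        {ω | U m ω = j ∧ Del m ω = true} := by
      rw [Set.disjoint_left]
      rintro ω ⟨_, h1⟩ ⟨_, h2⟩
      simp [h1] at h2
    rw [hsplit, measure_union hdisj (hmeasUD m j true),
      hlaw m hm2 hmn j hj false, hlaw m hm2 hmn j hj true]
    have hc1 : ENNReal.ofReal p + ENNReal.ofReal (c / Real.log n) = 1 := by
      rw [← ENNReal.ofReal_add hp0 (by positivity)]
      have : p + c / Real.log n = 1 := by rw [hp]; ring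
      rw [this, ENNReal.ofReal_one]
    simp only [if_true, if_false, Bool.false_eq_true]
    rw [← mul_add, hc1, mul_one]
  have hUfull : ∀ m : ℕ, 2 ≤ m → m ≤ n →
      P {ω | U m ω ∈ Finset.Icc 1 (m-1)} = 1 := by
    intro m hm2 hmn
    have hun : {ω | U m ω ∈ Finset.Icc 1 (m-1)} =
        ⋃ j ∈ Finset.Icc 1 (m-1), {ω | U m ω = j} := by
      ext ω; simp
    have hd : Set.PairwiseDisjoint (↑(Finset.Icc 1 (m-1)) : Set ℕ)
        (fun j => {ω | U m ω = j}) := by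
      intro j _ k _ hjk
      rw [Function.onFun, Set.disjoint_left]
      rintro ω h1 h2
      simp only [Set.mem_setOf_eq] at h1 h2
      exact hjk (h1.symm.trans h2)
    rw [hun, measure_biUnion_finset hd (fun j _ => hU m (measurableSet_singleton j))]
    rw [Finset.sum_congr rfl (fun j hj => hUj m hm2 hmn j hj)]
    rw [Finset.sum_const, Nat.card_Icc]
    have hm1 : (m - 1 + 1 - 1 : ℕ) = m - 1 := by omega
    rw [hm1, nsmul_eq_mul]
    exact ENNReal.mul_inv_cancel (Nat.cast_ne_zero.mpr (by omega))
      (ENNReal.natCast_ne_top _)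
  have hufull : P {ω | u ω ∈ Finset.Icc 1 n} = 1 := by
    have hun : {ω | u ω ∈ Finset.Icc 1 n} = ⋃ j ∈ Finset.Icc 1 n, {ω | u ω = j} := by
      ext ω; simp
    have hd : Set.PairwiseDisjoint (↑(Finset.Icc 1 n) : Set ℕ)
        (fun j => {ω | u ω = j}) := by
      intro j _ k _ hjk
      rw [Function.onFun, Set.disjoint_left]
      rintro ω h1 h2
      simp only [Set.mem_setOf_eq] at h1 h2
      exact hjk (h1.symm.trans h2)
    rw [hun, measure_biUnion_finset hd (fun j _ => hu (measurableSet_singleton j))]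
    rw [Finset.sum_congr rfl (fun j hj => hulaw j hj)]
    rw [Finset.sum_const, Nat.card_Icc]
    have hm1 : (n + 1 - 1 : ℕ) = n := by omega
    rw [hm1, nsmul_eq_mul]
    exact ENNReal.mul_inv_cancel (Nat.cast_ne_zero.mpr (by omega))
      (ENNReal.natCast_ne_top _)
  -- recursions
  have E1 : ∀ i : ℕ, i + 2 ≤ n →
      P {ω | C (i+2) ω = true} = ∑ j ∈ Finset.Icc 1 (i+1),
        (((i + 1 : ℕ) : ℝ≥0∞))⁻¹ * ENNReal.ofReal p * P {ω | C j ω = true} := by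
    intro i hin
    have hfull : P {ω | U (i+2) ω ∈ Finset.Icc 1 (i+1)} = 1 := by
      have h := hUfull (i+2) (by omega) hin
      have : (i + 2 - 1 : ℕ) = i + 1 := by omega
      rwa [this] at h
    have hmsfull : MeasurableSet {ω | U (i+2) ω ∈ Finset.Icc 1 (i+1)} := by
      have : {ω | U (i+2) ω ∈ Finset.Icc 1 (i+1)} =
          U (i+2) ⁻¹' (↑(Finset.Icc 1 (i+1)) : Set ℕ) := rfl
      rw [this]
      exact hU (i+2) (Finset.Icc 1 (i+1)).measurableSet
    have hcompl : P {ω | U (i+2) ω ∈ Finset.Icc 1 (i+1)}ᶜ = 0 := by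
      rw [measure_compl hmsfull (measure_ne_top _ _), hfull, measure_univ, tsub_self]
    have hinter : P {ω | C (i+2) ω = true}
        = P ({ω | C (i+2) ω = true} ∩ {ω | U (i+2) ω ∈ Finset.Icc 1 (i+1)}) :=
      (measure_inter_conull hcompl).symm
    have hset : {ω | C (i+2) ω = true} ∩ {ω | U (i+2) ω ∈ Finset.Icc 1 (i+1)}
        = ⋃ j ∈ Finset.Icc 1 (i+1), (X (i+2) ⁻¹' {(j, false)} ∩ C j ⁻¹' {true}) := by
      ext ω
      simp only [Set.mem_inter_iff, Set.mem_setOf_eq, Set.mem_iUnion, Set.mem_preimage,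
        Set.mem_singleton_iff, exists_prop]
      constructor
      · rintro ⟨hconn, hmem⟩
        have hle := (Finset.mem_Icc.mp hmem).2
        simp only [hC] at hconn
        rw [connToRoot, Bool.and_eq_true, Bool.not_eq_true'] at hconn
        obtain ⟨hdel, hconn2⟩ := hconn
        rw [min_eq_left hle] at hconn2
        exact ⟨U (i+2) ω, hmem, by simp [hX, Prod.ext_iff, hdel], hconn2⟩
      · rintro ⟨j, hjmem, hXeq, hCj⟩
        have hUD : U (i+2) ω = j ∧ Del (i+2) ω = false := by
          simpa [hX, Prod.ext_iff] using hXeq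
        have hle : U (i+2) ω ≤ i + 1 := by
          rw [hUD.1]; exact (Finset.mem_Icc.mp hjmem).2
        constructor
        · simp only [hC]
          rw [connToRoot, Bool.and_eq_true, Bool.not_eq_true']
          refine ⟨hUD.2, ?_⟩
          rw [min_eq_left hle, hUD.1]
          exact hCj
        · rw [hUD.1]; exact hjmem
    have hd : Set.PairwiseDisjoint (↑(Finset.Icc 1 (i+1)) : Set ℕ)
        (fun j => X (i+2) ⁻¹' {(j, false)} ∩ C j ⁻¹' {true}) := by
      intro j _ k _ hjk
      rw [Function.onFun, Set.disjoint_left]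
      rintro ω ⟨h1, _⟩ ⟨h2, _⟩
      simp only [Set.mem_preimage, Set.mem_singleton_iff] at h1 h2
      exact hjk (by rw [h1] at h2; exact ((Prod.mk.injEq _ _ _ _).mp h2.symm |>.1).symm)
    rw [hinter, hset, measure_biUnion_finset hd
      (fun j _ => ((hXmeas (i+2)) (measurableSet_singleton _)).inter
        ((hCmeas j) (measurableSet_singleton _)))]
    apply Finset.sum_congr rfl
    intro j hj
    rw [(hCrep i j (Finset.mem_Icc.mp hj).2).measure_inter_preimage_eq_mul _ _
      (measurableSet_singleton _) (measurableSet_singleton _)]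
    have hpre : X (i+2) ⁻¹' {(j, false)} = {ω | U (i+2) ω = j ∧ Del (i+2) ω = false} := by
      ext ω; simp [hX, Prod.ext_iff]
    have hlawe := hlaw (i+2) (by omega) hin j (by
      have : (i + 2 - 1 : ℕ) = i + 1 := by omega
      rw [this]; exact hj) false
    rw [hpre, hlawe]
    have h21 : (i + 2 - 1 : ℕ) = i + 1 := by omega
    rw [h21]
    simp only [Bool.false_eq_true, if_false]
    rfl
  have hbd1 : ∀ (f : Ω → ℕ) (j : ℕ) (ω : Ω), |if f ω = j then (1:ℝ) else 0| ≤ 1 := by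
    intro f j ω; by_cases h : f ω = j <;> simp [h]
  have hbd2 : ∀ (j : ℕ) (ω : Ω), |p * p ^ (D j ω)| ≤ 1 := by
    intro j ω
    rw [abs_of_nonneg (by positivity)]
    calc p * p ^ (D j ω) ≤ 1 * 1 := by
          apply mul_le_mul hp1 (pow_le_one₀ hp0 hp1) (by positivity) (by norm_num)
      _ = 1 := by norm_num
  have hbd3 : ∀ (j : ℕ) (ω : Ω), |p ^ (D j ω)| ≤ 1 := by
    intro j ω
    rw [abs_of_nonneg (by positivity)]
    exact pow_le_one₀ hp0 hp1
  have hIind : ∀ (f : Ω → ℕ), Measurable f → ∀ j : ℕ,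
      ∫ ω, (if f ω = j then (1:ℝ) else 0) ∂P = (P {ω | f ω = j}).toReal := by
    intro f hf j
    have hind : (fun ω => if f ω = j then (1:ℝ) else 0)
        = Set.indicator {ω | f ω = j} (fun _ => (1:ℝ)) := by
      funext ω; by_cases h : f ω = j <;> simp [Set.indicator_apply, h]
    rw [hind]
    have h2 := integral_indicator_const (μ := P) (1:ℝ) (hf (measurableSet_singleton j))
    simp only [smul_eq_mul, mul_one, measureReal_def] at h2
    exact h2
  have E2 : ∀ i : ℕ, i + 2 ≤ n →
      ∫ ω, p ^ (D (i+2) ω) ∂P = ∑ j ∈ Finset.Icc 1 (i+1),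
        (1 / ((i:ℝ) + 1)) * (p * ∫ ω, p ^ (D j ω) ∂P) := by
    intro i hin
    have h21 : (i + 2 - 1 : ℕ) = i + 1 := by omega
    have hfull : P {ω | U (i+2) ω ∈ Finset.Icc 1 (i+1)} = 1 := by
      have h := hUfull (i+2) (by omega) hin; rwa [h21] at h
    have hmsfull : MeasurableSet {ω | U (i+2) ω ∈ Finset.Icc 1 (i+1)} :=
      hU (i+2) (Finset.Icc 1 (i+1)).measurableSet
    have hae : ∀ᵐ ω ∂P, U (i+2) ω ∈ Finset.Icc 1 (i+1) := by
      rw [ae_iff]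
      have hcompl : {ω | ¬ U (i+2) ω ∈ Finset.Icc 1 (i+1)}
          = {ω | U (i+2) ω ∈ Finset.Icc 1 (i+1)}ᶜ := rfl
      rw [hcompl, measure_compl hmsfull (measure_ne_top _ _), hfull, measure_univ, tsub_self]
    have hcong : ∀ᵐ ω ∂P, p ^ (D (i+2) ω) = ∑ j ∈ Finset.Icc 1 (i+1),
        (if U (i+2) ω = j then (1:ℝ) else 0) * (p * p ^ (D j ω)) := by
      filter_upwards [hae] with ω hω
      have hle := (Finset.mem_Icc.mp hω).2
      have hDeq : D (i+2) ω = D (U (i+2) ω) ω + 1 := by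
        simp only [hD2]
        rw [depthToRoot, min_eq_left hle]
      rw [hDeq, Finset.sum_eq_single (U (i+2) ω)]
      · rw [if_pos rfl, one_mul, pow_succ]
        ring
      · intro j _ hne
        rw [if_neg (fun h => hne h.symm), zero_mul]
      · intro hnot; exact absurd hω hnot
    rw [integral_congr_ae hcong]
    have hint : ∀ j ∈ Finset.Icc 1 (i+1), Integrable (fun ω =>
        (if U (i+2) ω = j then (1:ℝ) else 0) * (p * p ^ (D j ω))) P := by
      intro j _
      apply integrable_of_bdd ?_ 1
      · intro ω
        rw [abs_mul]
        calc |if U (i+2) ω = j then (1:ℝ) else 0| * |p * p ^ (D j ω)| ≤ 1 * 1 :=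
            mul_le_mul (hbd1 _ j ω) (hbd2 j ω) (abs_nonneg _) (by norm_num)
          _ = 1 := by norm_num
      · exact ((measurable_of_countable (fun k : ℕ => if k = j then (1:ℝ) else 0)).comp
          (hU (i+2))).mul
          ((measurable_of_countable (fun d : ℕ => p * p ^ d)).comp (hDmeas j))
    rw [integral_finset_sum _ hint]
    apply Finset.sum_congr rfl
    intro j hj
    have hjle := (Finset.mem_Icc.mp hj).2
    have hIndep : IndepFun (fun ω => if U (i+2) ω = j then (1:ℝ) else 0)
        (fun ω => p * p ^ (D j ω)) P := by
      have h := (hDrep i j hjle).comp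
        (φ := fun x : ℕ × Bool => if x.1 = j then (1:ℝ) else 0)
        (ψ := fun d : ℕ => p * p ^ d)
        (measurable_of_countable _) (measurable_of_countable _)
      have heq1 : (fun x : ℕ × Bool => if x.1 = j then (1:ℝ) else 0) ∘ (X (i+2))
          = fun ω => if U (i+2) ω = j then (1:ℝ) else 0 := by
        funext ω; simp [hX]
      have heq2 : (fun d : ℕ => p * p ^ d) ∘ (D j) = fun ω => p * p ^ (D j ω) := rfl
      rwa [heq1, heq2] at h
    have hint1 : Integrable (fun ω => if U (i+2) ω = j then (1:ℝ) else 0) P :=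
      integrable_of_bdd ((measurable_of_countable (fun k : ℕ => if k = j then (1:ℝ) else 0)).comp
        (hU (i+2))) 1 (hbd1 _ j)
    have hint2 : Integrable (fun ω => p * p ^ (D j ω)) P :=
      integrable_of_bdd ((measurable_of_countable (fun d : ℕ => p * p ^ d)).comp (hDmeas j)) 1
        (hbd2 j)
    have hmulfun : (fun ω => (if U (i+2) ω = j then (1:ℝ) else 0) * (p * p ^ (D j ω)))
        = (fun ω => if U (i+2) ω = j then (1:ℝ) else 0) * (fun ω => p * p ^ (D j ω)) := rfl
    rw [hmulfun, hIndep.integral_mul_eq_mul_integral hint1.aestronglyMeasurable hint2.aestronglyMeasurable]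
    have hI1 : ∫ ω, (if U (i+2) ω = j then (1:ℝ) else 0) ∂P = 1 / ((i:ℝ) + 1) := by
      rw [hIind (U (i+2)) (hU (i+2)) j]
      have h := hUj (i+2) (by omega) hin j (by rw [h21]; exact hj)
      rw [h, h21, ENNReal.toReal_inv, ENNReal.toReal_natCast]
      push_cast
      ring
    have hI2 : ∫ ω, p * p ^ (D j ω) ∂P = p * ∫ ω, p ^ (D j ω) ∂P :=
      integral_const_mul p _
    show (∫ ω, (if U (i+2) ω = j then (1:ℝ) else 0) ∂P) * (∫ ω, p * p ^ (D j ω) ∂P) = _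
    rw [hI1, hI2]
  have hq1 : P {ω | C 1 ω = true} = 1 := by
    have huniv : {ω | C 1 ω = true} = Set.univ := by
      ext ω
      simp only [hC, Set.mem_setOf_eq, Set.mem_univ, iff_true]
      rw [connToRoot]
    rw [huniv, measure_univ]
  have hr1 : ∫ ω, p ^ (D 1 ω) ∂P = 1 := by
    have hone : ∀ ω, p ^ (D 1 ω) = 1 := by
      intro ω
      simp only [hD2]
      rw [depthToRoot, pow_zero]
    rw [integral_congr_ae (Filter.Eventually.of_forall hone)]
    simp
  have htermfin : ∀ (i : ℕ) (j : ℕ),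
      (((i + 1 : ℕ) : ℝ≥0∞))⁻¹ * ENNReal.ofReal p * P {ω | C j ω = true} ≠ ⊤ :=
    fun i j => ENNReal.mul_ne_top (ENNReal.mul_ne_top
      (ENNReal.inv_ne_top.mpr (Nat.cast_ne_zero.mpr (by omega))) ENNReal.ofReal_ne_top)
      (measure_ne_top _ _)
  have hqr : ∀ i : ℕ, 1 ≤ i → i ≤ n →
      (P {ω | C i ω = true}).toReal = ∫ ω, p ^ (D i ω) ∂P := by
    intro i
    induction i using Nat.strong_induction_on with
    | _ i ih =>
      match i with
      | 0 => intro h; omega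
      | 1 =>
        intro _ _
        rw [hq1, hr1, ENNReal.toReal_one]
      | (i+2) =>
        intro _ hin
        rw [E1 i hin, E2 i hin]
        rw [ENNReal.toReal_sum (fun j _ => htermfin i j)]
        apply Finset.sum_congr rfl
        intro j hj
        have hj1 := (Finset.mem_Icc.mp hj).1
        have hj2 := (Finset.mem_Icc.mp hj).2
        rw [ENNReal.toReal_mul, ENNReal.toReal_mul, ENNReal.toReal_inv, ENNReal.toReal_natCast,
          ENNReal.toReal_ofReal hp0, ih j (by omega) hj1 (by omega)]
        push_cast
        ring
  have hsum : ∀ m : ℕ, 1 ≤ m → m ≤ n →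
      ∑ i ∈ Finset.Icc 1 m, (P {ω | C i ω = true}).toReal
        = ∏ k ∈ Finset.Icc 1 (m-1), ((k : ℝ) + p) / k := by
    intro m
    induction m with
    | zero => intro h; omega
    | succ m ihm =>
      intro _ hmn
      by_cases hm0 : m = 0
      · subst hm0
        rw [Finset.Icc_self, Finset.sum_singleton, hq1, ENNReal.toReal_one]
        norm_num
      · obtain ⟨m', rfl⟩ : ∃ m', m = m' + 1 := ⟨m - 1, by omega⟩
        have hms := ihm (by omega) (by omega)
        simp only [Nat.add_sub_cancel] at hms ⊢
        rw [Finset.sum_Icc_succ_top (by omega : 1 ≤ m' + 1 + 1), hms]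
        have hE := E1 m' (by omega)
        have hqtop : (P {ω | C (m'+1+1) ω = true}).toReal
            = ∑ j ∈ Finset.Icc 1 (m'+1),
              ((1/((m':ℝ)+1)) * p) * (P {ω | C j ω = true}).toReal := by
          rw [show m'+1+1 = m'+2 from rfl, hE,
            ENNReal.toReal_sum (fun j _ => htermfin m' j)]
          apply Finset.sum_congr rfl
          intro j _
          rw [ENNReal.toReal_mul, ENNReal.toReal_mul, ENNReal.toReal_inv, ENNReal.toReal_natCast,
            ENNReal.toReal_ofReal hp0]
          push_cast
          ring
        rw [hqtop, ← Finset.mul_sum, hms]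
        rw [Finset.prod_Icc_succ_top (by omega : 1 ≤ m' + 1)]
        have hm'0 : ((m':ℝ) + 1) ≠ 0 := by positivity
        have key : ∀ S : ℝ, S + (1/((m':ℝ)+1) * p) * S = S * ((((m':ℝ)+1) + p)/((m':ℝ)+1)) := by
          intro S; field_simp
        push_cast
        exact key _
  have hIindB : ∀ (b : Ω → Bool), Measurable b →
      ∫ ω, (if b ω = true then (1:ℝ) else 0) ∂P = (P {ω | b ω = true}).toReal := by
    intro b hb
    have hind : (fun ω => if b ω = true then (1:ℝ) else 0)
        = Set.indicator {ω | b ω = true} (fun _ => (1:ℝ)) := by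
      funext ω; by_cases h : b ω = true <;> simp [Set.indicator_apply, h]
    rw [hind]
    have h2 := integral_indicator_const (μ := P) (1:ℝ) (hb (measurableSet_singleton true))
    simp only [smul_eq_mul, mul_one, measureReal_def] at h2
    exact h2
  have hGint : ∫ ω, (Set.ncard {i : ℕ | 1 ≤ i ∧ i ≤ n ∧
      connToRoot (fun m => U m ω) (fun m => Del m ω) i = true} : ℝ) / n ∂P
      = (∑ i ∈ Finset.Icc 1 n, (P {ω | C i ω = true}).toReal) / n := by
    have hcard : ∀ ω, (Set.ncard {i : ℕ | 1 ≤ i ∧ i ≤ n ∧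
        connToRoot (fun m => U m ω) (fun m => Del m ω) i = true} : ℝ)
        = ∑ i ∈ Finset.Icc 1 n, (if C i ω = true then (1:ℝ) else 0) := by
      intro ω
      have hset : {i : ℕ | 1 ≤ i ∧ i ≤ n ∧
          connToRoot (fun m => U m ω) (fun m => Del m ω) i = true}
          = ↑((Finset.Icc 1 n).filter (fun i => C i ω = true)) := by
        ext i
        simp [hC, Finset.mem_Icc, and_assoc]
      rw [hset, Set.ncard_coe_finset, Finset.card_filter]
      push_cast
      apply Finset.sum_congr rfl
      intro i _
      by_cases h : C i ω = true <;> simp [h]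
    have hfeq : (fun ω => (Set.ncard {i : ℕ | 1 ≤ i ∧ i ≤ n ∧
        connToRoot (fun m => U m ω) (fun m => Del m ω) i = true} : ℝ) / n)
        = fun ω => (∑ i ∈ Finset.Icc 1 n, (if C i ω = true then (1:ℝ) else 0)) / n := by
      funext ω; rw [hcard ω]
    rw [hfeq, integral_div]
    congr 1
    have hintg : ∀ i ∈ Finset.Icc 1 n,
        Integrable (fun ω => if C i ω = true then (1:ℝ) else 0) P := by
      intro i _
      apply integrable_of_bdd ?_ 1
      · intro ω; by_cases h : C i ω = true <;> simp [h]
      · exact (measurable_of_countable (fun b : Bool => if b = true then (1:ℝ) else 0)).comp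
          (hCmeas i)
    rw [integral_finset_sum _ hintg]
    exact Finset.sum_congr rfl (fun i _ => hIindB (C i) (hCmeas i))
  have hhint : ∫ ω, p ^ (depthToRoot (fun m => U m ω) (u ω)) ∂P
      = (1/(n:ℝ)) * ∑ j ∈ Finset.Icc 1 n, ∫ ω, p ^ (D j ω) ∂P := by
    have hmsfull : MeasurableSet {ω | u ω ∈ Finset.Icc 1 n} :=
      hu (Finset.Icc 1 n).measurableSet
    have hae : ∀ᵐ ω ∂P, u ω ∈ Finset.Icc 1 n := by
      rw [ae_iff]
      have hcompl : {ω | ¬ u ω ∈ Finset.Icc 1 n} = {ω | u ω ∈ Finset.Icc 1 n}ᶜ := rfl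
      rw [hcompl, measure_compl hmsfull (measure_ne_top _ _), hufull, measure_univ, tsub_self]
    have hcong : ∀ᵐ ω ∂P, p ^ (depthToRoot (fun m => U m ω) (u ω))
        = ∑ j ∈ Finset.Icc 1 n, (if u ω = j then (1:ℝ) else 0) * p ^ (D j ω) := by
      filter_upwards [hae] with ω hω
      rw [Finset.sum_eq_single (u ω)]
      · rw [if_pos rfl, one_mul]
      · intro j _ hne
        rw [if_neg (fun h => hne h.symm), zero_mul]
      · intro hnot; exact absurd hω hnot
    rw [integral_congr_ae hcong]
    have hint : ∀ j ∈ Finset.Icc 1 n, Integrable (fun ω =>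
        (if u ω = j then (1:ℝ) else 0) * p ^ (D j ω)) P := by
      intro j _
      apply integrable_of_bdd ?_ 1
      · intro ω
        rw [abs_mul]
        calc |if u ω = j then (1:ℝ) else 0| * |p ^ (D j ω)| ≤ 1 * 1 :=
            mul_le_mul (hbd1 _ j ω) (hbd3 j ω) (abs_nonneg _) (by norm_num)
          _ = 1 := by norm_num
      · exact ((measurable_of_countable (fun k : ℕ => if k = j then (1:ℝ) else 0)).comp hu).mul
          ((measurable_of_countable (fun d : ℕ => p ^ d)).comp (hDmeas j))
    rw [integral_finset_sum _ hint, Finset.mul_sum]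
    apply Finset.sum_congr rfl
    intro j hj
    have hIndep : IndepFun (fun ω => if u ω = j then (1:ℝ) else 0)
        (fun ω => p ^ (D j ω)) P := by
      have h := (hDrep0 j).comp
        (φ := fun x : ℕ × Bool => if x.1 = j then (1:ℝ) else 0)
        (ψ := fun d : ℕ => p ^ d)
        (measurable_of_countable _) (measurable_of_countable _)
      have heq1 : (fun x : ℕ × Bool => if x.1 = j then (1:ℝ) else 0) ∘ (X 0)
          = fun ω => if u ω = j then (1:ℝ) else 0 := by
        funext ω; simp [hX]
      have heq2 : (fun d : ℕ => p ^ d) ∘ (D j) = fun ω => p ^ (D j ω) := rfl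
      rwa [heq1, heq2] at h
    have hint1 : Integrable (fun ω => if u ω = j then (1:ℝ) else 0) P :=
      integrable_of_bdd ((measurable_of_countable
        (fun k : ℕ => if k = j then (1:ℝ) else 0)).comp hu) 1 (hbd1 _ j)
    have hint2 : Integrable (fun ω => p ^ (D j ω)) P :=
      integrable_of_bdd ((measurable_of_countable (fun d : ℕ => p ^ d)).comp (hDmeas j)) 1
        (hbd3 j)
    have hmulfun : (fun ω => (if u ω = j then (1:ℝ) else 0) * p ^ (D j ω))
        = (fun ω => if u ω = j then (1:ℝ) else 0) * (fun ω => p ^ (D j ω)) := rfl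
    rw [hmulfun, hIndep.integral_mul_eq_mul_integral hint1.aestronglyMeasurable hint2.aestronglyMeasurable]
    have hI1 : ∫ ω, (if u ω = j then (1:ℝ) else 0) ∂P = 1 / (n:ℝ) := by
      rw [hIind u hu j, hulaw j hj, ENNReal.toReal_inv, ENNReal.toReal_natCast]
      ring
    show (∫ ω, (if u ω = j then (1:ℝ) else 0) ∂P) * (∫ ω, p ^ (D j ω) ∂P) = _
    rw [hI1]
  constructor
  · rw [hGint, hhint]
    rw [Finset.sum_congr rfl (fun i hi => hqr i (Finset.mem_Icc.mp hi).1 (Finset.mem_Icc.mp hi).2)]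
    rw [div_eq_mul_inv, mul_comm, one_div]
  · rw [hGint, hsum n (by omega) le_rfl]

end Core

theorem first_moment_of_giant_cluster
    (c : ℝ) (hc : 0 < c)
    -- for each `n`, a probability space carrying the percolated random recursive tree
    -- and an independent uniform vertex
    (Ω : ℕ → Type) (mΩ : ∀ n, MeasurableSpace (Ω n))
    (P : ∀ n, Measure (Ω n)) (hP : ∀ n, IsProbabilityMeasure (P n))
    -- `U n m` = parent of vertex `m` (for `2 ≤ m ≤ n`); `Del n m` = "edge from `m` deleted";
    -- `u n` = a uniform random vertex of `[n]`
    (U : ∀ n, ℕ → Ω n → ℕ) (Del : ∀ n, ℕ → Ω n → Bool) (u : ∀ n, Ω n → ℕ)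
    (hUmeas : ∀ n m, Measurable (U n m)) (hDelmeas : ∀ n m, Measurable (Del n m))
    (humeas : ∀ n, Measurable (u n))
    -- the pairs (parent, deletion mark) of the different vertices and the uniform vertex
    -- `u n` (labelled by the otherwise unused index `0`) are mutually independent
    (hindep : ∀ n, iIndepFun
      (fun m ω => if m = 0 then (u n ω, false) else (U n m ω, Del n m ω)) (P n))
    -- for `2 ≤ m ≤ n` (and `n` with `c ≤ log n`, so that `p_n = 1 - c/log n ∈ [0,1]`):
    -- the parent of `m` is uniform on `{1, …, m-1}` and, independently, the edge from `m`
    -- is deleted with probability `1 - p_n = c / log n`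
    (hlaw : ∀ n : ℕ, c ≤ Real.log n → ∀ m : ℕ, 2 ≤ m → m ≤ n →
      ∀ j ∈ Finset.Icc 1 (m - 1), ∀ b : Bool,
      P n {ω | U n m ω = j ∧ Del n m ω = b} =
        (((m - 1 : ℕ) : ℝ≥0∞))⁻¹ *
          (if b then ENNReal.ofReal (c / Real.log n)
            else ENNReal.ofReal (1 - c / Real.log n)))
    -- `u n` is uniform on `{1, …, n}`
    (hulaw : ∀ n : ℕ, 1 ≤ n → ∀ j ∈ Finset.Icc 1 n,
      P n {ω | u n ω = j} = ((n : ℝ≥0∞))⁻¹)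
    -- `G n` = size of the root cluster, `h n` = height of the uniform vertex `u n`
    (G : ∀ n, Ω n → ℕ) (h : ∀ n, Ω n → ℕ)
    (hG : ∀ n ω, G n ω = Set.ncard {i : ℕ | 1 ≤ i ∧ i ≤ n ∧
      connToRoot (fun m => U n m ω) (fun m => Del n m ω) i = true})
    (hh : ∀ n ω, h n ω = depthToRoot (fun m => U n m ω) (u n ω)) :
    -- conclusions: `E(n⁻¹ G_n) = E(p_n^{h_n})` in the supercritical regime, and
    -- `E(n⁻¹ G_n) → e^{-c}`
    (∀ n : ℕ, c ≤ Real.log n →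
      ∫ ω, (G n ω : ℝ) / n ∂(P n) = ∫ ω, (1 - c / Real.log n) ^ (h n ω) ∂(P n)) ∧
    Tendsto (fun n : ℕ => ∫ ω, (G n ω : ℝ) / n ∂(P n)) atTop (𝓝 (Real.exp (-c))) := by

  have hid : ∀ n : ℕ, c ≤ Real.log n →
      (∫ ω, (G n ω : ℝ) / n ∂(P n) = ∫ ω, (1 - c / Real.log n) ^ (h n ω) ∂(P n)) ∧
      ∫ ω, (G n ω : ℝ) / n ∂(P n)
        = (∏ k ∈ Finset.Icc 1 (n-1), ((k:ℝ) + (1 - c / Real.log n)) / k) / n := by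
    intro n hn
    haveI := hP n
    have hn1 : 1 ≤ n := by
      by_contra hcon
      have : n = 0 := by omega
      subst this
      simp only [Nat.cast_zero, Real.log_zero] at hn
      linarith
    have hcore := core_lemma (P n) c n (U n) (Del n) (u n) hc hn (hUmeas n) (hDelmeas n)
      (humeas n) (hindep n) (hlaw n hn) (hulaw n hn1)
    have heq1 : ∫ ω, (G n ω : ℝ) / n ∂(P n)
        = ∫ ω, (Set.ncard {i : ℕ | 1 ≤ i ∧ i ≤ n ∧
          connToRoot (fun m => U n m ω) (fun m => Del n m ω) i = true} : ℝ) / n ∂(P n) := by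
      simp only [hG]
    have heq2 : ∫ ω, (1 - c / Real.log n) ^ (h n ω) ∂(P n)
        = ∫ ω, (1 - c / Real.log n) ^ (depthToRoot (fun m => U n m ω) (u n ω)) ∂(P n) := by
      simp only [hh]
    exact ⟨by rw [heq1, heq2]; exact hcore.1, by rw [heq1]; exact hcore.2⟩
  refine ⟨fun n hn => (hid n hn).1, ?_⟩
  have hev : ∀ᶠ n : ℕ in atTop, c ≤ Real.log n :=
    (Real.tendsto_log_atTop.comp tendsto_natCast_atTop_atTop).eventually_ge_atTop c
  refine Filter.Tendsto.congr' ?_ (prod_tendsto c hc)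
  filter_upwards [hev, eventually_ge_atTop 1] with n hn hn1
  rw [(hid n hn).2, prod_ratio_shift (1 - c / Real.log n) n hn1]


end
end
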